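/- arXiv:1302.2381 — 5 statements merged into one kernel-verified Lean document; each statement's English description precedes it below -/
import Mathlib

section
/- Let M be a finitely generated module over a discrete valuation ring O with M of finite cardinality. Then the cardinality of M equals the cardinality of O/Fit_O(M), where Fit_O(M) is the Fitting ideal of M. -/
/-- The zeroth Fitting ideal of an `O`-module `M`: the ideal generated by the
determinants of all square matrices `A` presenting `M`, i.e. such that
`M ≅ O^n / A·O^n`. -/
noncomputable def fittingIdeal (O : Type*) [CommRing O] (M : Type*) [AddCommGroup M]
    [Module O M] : Ideal O :=
  Ideal.span {d : O | ∃ (n : ℕ) (A : Matrix (Fin n) (Fin n) O), d = A.det ∧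
    Nonempty (M ≃ₗ[O] ((Fin n → O) ⧸ LinearMap.range A.mulVecLin))}

open Submodule
open scoped DirectSum

set_option linter.unusedSectionVars false

namespace CardFittingAux

universe u v

variable {O : Type u} [CommRing O] [IsDomain O] [IsDiscreteValuationRing O]

lemma aux_infinite : Infinite O := by
  by_contra h
  rw [not_infinite_iff_finite] at h
  exact IsDiscreteValuationRing.not_isField O (Finite.isField_of_domain O)

lemma aux_torsion (M : Type*) [AddCommGroup M] [Module O M] [Finite M] :
    Module.IsTorsion O M := by
  have : Infinite O := aux_infinite
  intro x
  obtain ⟨a, b, hab, h⟩ := Finite.exists_ne_map_eq_of_infinite (fun a : O => a • x)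
  refine ⟨⟨a - b, mem_nonZeroDivisors_of_ne_zero (sub_ne_zero.mpr hab)⟩, ?_⟩
  simp only [Submonoid.smul_def, sub_smul, h, sub_self]

lemma range_diagonal_eq (n : ℕ) (d : Fin n → O) :
    LinearMap.range (Matrix.diagonal d).mulVecLin =
      Submodule.pi Set.univ (fun i => Ideal.span {d i}) := by
  ext x
  simp only [LinearMap.mem_range, Submodule.mem_pi, Set.mem_univ, forall_true_left,
    Ideal.mem_span_singleton]
  constructor
  · rintro ⟨v, rfl⟩ i
    rw [Matrix.mulVecLin_apply, Matrix.mulVec_diagonal]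
    exact Dvd.intro _ rfl
  · intro h
    choose c hc using h
    refine ⟨c, funext fun i => ?_⟩
    rw [Matrix.mulVecLin_apply, Matrix.mulVec_diagonal, ← hc i]

lemma exists_diagonal_presentation (M : Type v) [AddCommGroup M] [Module O M]
    [Module.Finite O M] [Finite M] :
    ∃ (n : ℕ) (d : Fin n → O),
      Nonempty (M ≃ₗ[O] ((Fin n → O) ⧸ LinearMap.range (Matrix.diagonal d).mulVecLin)) := by
  classical
  haveI : Module.Finite O (ULift.{u} M) := Module.Finite.equiv ULift.moduleEquiv.symm
  obtain ⟨ι, hι, p, hp, e, ⟨l⟩⟩ :=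
    Module.equiv_directSum_of_isTorsion (R := O) (M := ULift.{u} M) (aux_torsion _)
  haveI := hι
  set n := Fintype.card ι
  set κ : ι ≃ Fin n := Fintype.equivFin ι
  set d : Fin n → O := fun j => p (κ.symm j) ^ e (κ.symm j) with hd
  refine ⟨n, d, ⟨?_⟩⟩
  have e1 : M ≃ₗ[O] (⨁ i : ι, O ⧸ (O ∙ p i ^ e i)) := ULift.moduleEquiv.symm.trans l
  have e2 : (⨁ i : ι, O ⧸ (O ∙ p i ^ e i)) ≃ₗ[O] (∀ i : ι, O ⧸ (O ∙ p i ^ e i)) :=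
    DirectSum.linearEquivFunOnFintype O ι _
  have e3 : (∀ i : ι, O ⧸ (O ∙ p i ^ e i)) ≃ₗ[O]
      (∀ j : Fin n, O ⧸ (O ∙ p (κ.symm j) ^ e (κ.symm j))) :=
    LinearEquiv.piCongrLeft' O (fun i => O ⧸ (O ∙ p i ^ e i)) κ
  have e4 : (∀ j : Fin n, O ⧸ Ideal.span {d j}) ≃ₗ[O]
      ((Fin n → O) ⧸ Submodule.pi Set.univ (fun j => Ideal.span {d j})) :=
    (Submodule.quotientPi _).symm
  have e5 : ((Fin n → O) ⧸ Submodule.pi Set.univ (fun j => Ideal.span {d j})) ≃ₗ[O]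
      ((Fin n → O) ⧸ LinearMap.range (Matrix.diagonal d).mulVecLin) :=
    Submodule.quotEquivOfEq _ _ (range_diagonal_eq n d).symm
  exact e1.trans (e2.trans (e3.trans (e4.trans e5)))

lemma cardQuot_span_irred_pow {ϖ : O} (hϖ : Irreducible ϖ) (k : ℕ) :
    cardQuot (Ideal.span {ϖ} ^ k) = cardQuot (Ideal.span {ϖ}) ^ k := by
  haveI : (Ideal.span {ϖ}).IsPrime :=
    (Ideal.span_singleton_prime hϖ.ne_zero).mpr
      (UniqueFactorizationMonoid.irreducible_iff_prime.mp hϖ)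
  exact cardQuot_pow_of_prime (by simp [Ideal.span_singleton_eq_bot, hϖ.ne_zero])

lemma cardQuot_mul' (I J : Ideal O) (hI : I ≠ ⊥) (hJ : J ≠ ⊥) :
    cardQuot (I * J) = cardQuot I * cardQuot J := by
  obtain ⟨ϖ, hϖ⟩ := IsDiscreteValuationRing.exists_irreducible O
  obtain ⟨a, rfl⟩ := IsDiscreteValuationRing.ideal_eq_span_pow_irreducible hI hϖ
  obtain ⟨b, rfl⟩ := IsDiscreteValuationRing.ideal_eq_span_pow_irreducible hJ hϖ
  rw [← Ideal.span_singleton_pow, ← Ideal.span_singleton_pow, ← pow_add,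
    cardQuot_span_irred_pow hϖ, cardQuot_span_irred_pow hϖ, cardQuot_span_irred_pow hϖ, pow_add]

lemma cardQuot_prod {ι : Type*} (s : Finset ι) (a : ι → O) (h : ∀ i ∈ s, a i ≠ 0) :
    cardQuot (Ideal.span {∏ i ∈ s, a i}) = ∏ i ∈ s, cardQuot (Ideal.span {a i}) := by
  classical
  induction s using Finset.cons_induction with
  | empty => simp
  | cons i s his ih =>
    rw [Finset.prod_cons, Finset.prod_cons, ← Ideal.span_singleton_mul_span_singleton,
      cardQuot_mul' _ _ (by rw [Ne, Ideal.span_singleton_eq_bot]; exact h i (Finset.mem_cons_self i s))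
        (by simp only [ne_eq, Ideal.span_singleton_eq_bot, Finset.prod_eq_zero_iff]
            rintro ⟨j, hj, hj0⟩
            exact h j (Finset.mem_cons_of_mem hj) hj0),
      ih (fun j hj => h j (Finset.mem_cons_of_mem hj))]

lemma cardQuot_inj {I J : Ideal O} (hc : cardQuot I = cardQuot J) (h0 : cardQuot I ≠ 0) :
    I = J := by
  have : Infinite O := aux_infinite
  have hI : I ≠ ⊥ := by rintro rfl; rw [cardQuot_bot] at h0; exact h0 rfl
  have hJ : J ≠ ⊥ := by rintro rfl; rw [hc, cardQuot_bot] at h0; exact h0 rfl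
  obtain ⟨ϖ, hϖ⟩ := IsDiscreteValuationRing.exists_irreducible O
  obtain ⟨a, rfl⟩ := IsDiscreteValuationRing.ideal_eq_span_pow_irreducible hI hϖ
  obtain ⟨b, rfl⟩ := IsDiscreteValuationRing.ideal_eq_span_pow_irreducible hJ hϖ
  simp only [← Ideal.span_singleton_pow] at hc h0 ⊢
  rw [cardQuot_span_irred_pow hϖ] at h0
  rw [cardQuot_span_irred_pow hϖ, cardQuot_span_irred_pow hϖ] at hc
  set q := cardQuot (Ideal.span {ϖ}) with hq
  have hq1 : q ≠ 1 := by
    intro hq1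
    rw [hq, cardQuot_eq_one_iff] at hq1
    exact hϖ.not_isUnit (Ideal.span_singleton_eq_top.mp hq1)
  by_cases hq0 : q = 0
  · have ha : a = 0 := by
      by_contra ha
      exact h0 (by rw [hq0, zero_pow ha])
    have hb : b = 0 := by
      by_contra hb
      rw [ha, pow_zero, hq0, zero_pow hb] at hc
      exact one_ne_zero hc
    rw [ha, hb]
  · have : a = b := Nat.pow_right_injective (by omega) hc
    rw [this]

lemma card_quot_span_det (n : ℕ) (A : Matrix (Fin n) (Fin n) O)
    (hfin : Nat.card ((Fin n → O) ⧸ LinearMap.range A.mulVecLin) ≠ 0) :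
    Nat.card (O ⧸ Ideal.span {A.det}) =
      Nat.card ((Fin n → O) ⧸ LinearMap.range A.mulVecLin) := by
  classical
  have hinf : Infinite O := aux_infinite
  set N := LinearMap.range A.mulVecLin with hN
  obtain ⟨m, snf⟩ := Submodule.smithNormalForm (Pi.basisFun O (Fin n)) N
  have hidx : N.toAddSubgroup.index = Nat.card ((Fin n → O) ⧸ N) := rfl
  have hindex := snf.toAddSubgroup_index_eq_pow_mul_prod
  have hmn : m = n := by
    by_contra hne
    have hle : m ≤ n := by simpa using Fintype.card_le_of_embedding snf.f
    have hpos : n - m ≠ 0 := by omega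
    rw [hidx] at hindex
    rw [hindex] at hfin
    simp [Nat.card_eq_zero_of_infinite, zero_pow hpos] at hfin
  subst hmn
  have hidx2 : Nat.card ((Fin m → O) ⧸ N) = ∏ i : Fin m, cardQuot (Ideal.span {snf.a i}) := by
    rw [← hidx, hindex, Fintype.card_fin, Nat.sub_self, pow_zero, one_mul]
    rfl
  have ha : ∀ i, snf.a i ≠ 0 := by
    intro i hzero
    have h1 := snf.snf i
    rw [hzero, zero_smul] at h1
    exact snf.bN.ne_zero i (Subtype.ext h1)
  have hassoc : Associated (∏ i, snf.a i) A.det := by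
    have hσ : Function.Bijective snf.f := Finite.injective_iff_bijective.mp snf.f.injective
    set σ : Equiv.Perm (Fin m) := Equiv.ofBijective snf.f hσ with hσdef
    set g : (Fin m → O) →ₗ[O] N := A.mulVecLin.rangeRestrict with hg
    have hcomp : N.subtype ∘ₗ g = A.mulVecLin := LinearMap.subtype_comp_codRestrict _ _ _
    have hgsurj : Function.Surjective g := LinearMap.surjective_rangeRestrict _
    have hginj : Function.Injective g := by
      have hend : Function.Surjective (snf.bN.equivFun.toLinearMap ∘ₗ g) :=
        snf.bN.equivFun.surjective.comp hgsurj
      have := OrzechProperty.injective_of_surjective_endomorphism _ hend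
      exact fun x y hxy => this (by simp [LinearMap.comp_apply, hxy])
    have hdetA : A.det = LinearMap.det A.mulVecLin := by
      rw [← Matrix.toLin'_apply', LinearMap.det_toLin']
    have hdet2 : LinearMap.det A.mulVecLin =
        Matrix.det (LinearMap.toMatrix snf.bM snf.bM A.mulVecLin) :=
      (LinearMap.det_toMatrix snf.bM _).symm
    have hsplit : LinearMap.toMatrix snf.bM snf.bM A.mulVecLin =
        LinearMap.toMatrix snf.bN snf.bM N.subtype * LinearMap.toMatrix snf.bM snf.bN g := by
      rw [← LinearMap.toMatrix_comp, hcomp]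
    have hT1 : LinearMap.toMatrix snf.bN snf.bM N.subtype =
        (Matrix.diagonal snf.a).submatrix σ.symm id := by
      ext j i
      rw [LinearMap.toMatrix_apply]
      simp only [Submodule.subtype_apply, snf.snf i, map_smul, Module.Basis.repr_self,
        Finsupp.smul_single, smul_eq_mul, mul_one, Finsupp.single_apply,
        Matrix.submatrix_apply, Matrix.diagonal_apply, id_eq]
      have hfi : σ i = snf.f i := rfl
      by_cases h : snf.f i = j
      · have h2 : σ.symm j = i := by rw [← h, ← hfi, Equiv.symm_apply_apply]
        rw [if_pos h, if_pos h2, h2]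
      · rw [if_neg h, if_neg]
        intro hc
        apply h
        have h3 := congrArg σ hc
        rw [Equiv.apply_symm_apply] at h3
        rw [h3]
        exact hfi.symm
    have hu2 : IsUnit (LinearMap.toMatrix snf.bM snf.bN g).det :=
      (LinearEquiv.ofBijective g ⟨hginj, hgsurj⟩).isUnit_det snf.bM snf.bN
    have hdetT1 : (LinearMap.toMatrix snf.bN snf.bM N.subtype).det =
        (Equiv.Perm.sign σ.symm : ℤ) * ∏ i, snf.a i := by
      rw [hT1, Matrix.det_permute, Matrix.det_diagonal]
    have husign : IsUnit ((Equiv.Perm.sign σ.symm : ℤ) : O) := by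
      rcases Int.units_eq_one_or (Equiv.Perm.sign σ.symm) with h | h <;> simp [h]
    rw [hdetA, hdet2, hsplit, Matrix.det_mul, hdetT1]
    obtain ⟨u, hu⟩ := husign
    obtain ⟨w, hw⟩ := hu2
    exact ⟨u * w, by rw [Units.val_mul, ← hu, ← hw]; ring⟩
  rw [hidx2, ← cardQuot_prod _ _ (fun i _ => ha i),
    Ideal.span_singleton_eq_span_singleton.mpr hassoc]
  rfl

end CardFittingAux

open CardFittingAux in
/-- If `M` is a finitely generated module of finite cardinality over a discrete
valuation ring `O`, then `#M = #(O / Fit_O(M))`. -/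
theorem card_eq_card_quotient_fittingIdeal
    (O : Type*) [CommRing O] [IsDomain O] [IsDiscreteValuationRing O]
    (M : Type*) [AddCommGroup M] [Module O M] [Module.Finite O M] [Finite M] :
    Nat.card M = Nat.card (O ⧸ fittingIdeal O M) := by
  classical
  obtain ⟨n, d, ⟨eqv⟩⟩ := exists_diagonal_presentation (O := O) M
  set S : Set O := {d : O | ∃ (n : ℕ) (A : Matrix (Fin n) (Fin n) O), d = A.det ∧
    Nonempty (M ≃ₗ[O] ((Fin n → O) ⧸ LinearMap.range A.mulVecLin))} with hS
  have hcardM : Nat.card M ≠ 0 := Nat.card_pos.ne'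
  have hd0 : (Matrix.diagonal d).det ∈ S := ⟨n, Matrix.diagonal d, rfl, ⟨eqv⟩⟩
  have hcard : ∀ x ∈ S, Nat.card (O ⧸ Ideal.span {x}) = Nat.card M := by
    rintro x ⟨n', A, rfl, ⟨e⟩⟩
    have h1 : Nat.card ((Fin n' → O) ⧸ LinearMap.range A.mulVecLin) = Nat.card M :=
      (Nat.card_congr e.toEquiv).symm
    rw [card_quot_span_det n' A (by rw [h1]; exact hcardM), h1]
  have hspan : ∀ x ∈ S, Ideal.span {x} = Ideal.span {(Matrix.diagonal d).det} := by
    intro x hx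
    refine cardQuot_inj ?_ ?_
    · rw [cardQuot_apply, cardQuot_apply, hcard x hx, hcard _ hd0]
    · rw [cardQuot_apply, hcard x hx]; exact hcardM
  have hfit : fittingIdeal O M = Ideal.span {(Matrix.diagonal d).det} := by
    apply le_antisymm
    · rw [fittingIdeal, Ideal.span_le]
      intro x hx
      rw [← hspan x hx]
      exact Ideal.subset_span rfl
    · exact Ideal.span_mono (Set.singleton_subset_iff.mpr hd0)
  rw [hfit, ← hcard _ hd0]
end

section
/- Let O be a DVR, A = O^n with a product decomposition A = A_1 × ... × A_s where A_i = O^{n_i}, and let T ⊆ A be an O-subalgebra of full rank as an O-submodule. Let J ⊆ T be an ideal of finite index, and let T_i, J_i be the images of T, J under the projection A → A_i. Suppose α = (α_1,...,α_s) ∈ J is such that α_i generates J_i as an ideal of T_i for each i. Then #T/J ≤ #T/αT = ∏_{i=1}^s #T_i/α_i T_i. -/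
set_option synthInstance.maxHeartbeats 400000

set_option maxHeartbeats 1000000
open Function

section helpers

lemma natCard_quot_eq_index {R M : Type*} [Ring R] [AddCommGroup M] [Module R M]
    (p : Submodule R M) : Nat.card (M ⧸ p) = p.toAddSubgroup.index := rfl

/-- If `M⧸p` and `p` are finite, so is `M`. -/
lemma finite_of_finite_quot_finite {R M : Type*} [Ring R] [AddCommGroup M] [Module R M]
    (p : Submodule R M) [Finite (M ⧸ p)] [Finite p] : Finite M := by
  have hmem : ∀ x : M, x - Quotient.out (Submodule.Quotient.mk x : M ⧸ p) ∈ p := by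
    intro x
    rw [← Submodule.Quotient.mk_eq_zero, Submodule.Quotient.mk_sub]
    rw [show Submodule.Quotient.mk (Quotient.out (Submodule.Quotient.mk x : M ⧸ p))
        = (Submodule.Quotient.mk x : M ⧸ p) from Quotient.out_eq _]
    simp
  have key : Function.Injective (fun x : M =>
      ((Submodule.Quotient.mk x : M ⧸ p),
        (⟨x - Quotient.out (Submodule.Quotient.mk x : M ⧸ p), hmem x⟩ : p))) := by
    intro x y h
    simp only [Prod.mk.injEq, Subtype.mk.injEq] at h
    obtain ⟨h1, h2⟩ := h
    rw [h1] at h2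
    exact sub_left_injective h2
  exact Finite.of_injective _ key

lemma infinite_of_dvr {O : Type*} [CommRing O] [IsDomain O] [IsDiscreteValuationRing O] :
    Infinite O := by
  obtain ⟨ϖ, hϖ⟩ := IsDiscreteValuationRing.exists_irreducible O
  refine Infinite.of_injective (fun k : ℕ => ϖ ^ k) ?_
  intro a b hab
  by_contra hne
  wlog hlt : a < b generalizing a b
  · exact this hab.symm (Ne.symm hne) (by omega)
  have h1 : ϖ ^ a * ϖ ^ (b - a) = ϖ ^ a * 1 := by
    rw [mul_one, ← pow_add]
    rw [show a + (b - a) = b by omega]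
    exact hab.symm
  have h2 : ϖ ^ (b - a) = 1 := mul_left_cancel₀ (pow_ne_zero a hϖ.ne_zero) h1
  exact hϖ.not_isUnit (IsUnit.of_pow_eq_one h2 (by omega))

/-- finiteness of `O⧸(a*b)` from the two factors. -/
lemma finite_quot_span_mul {O : Type*} [CommRing O] (a b : O)
    (ha : Finite (O ⧸ Ideal.span {a})) (hb : Finite (O ⧸ Ideal.span {b})) :
    Finite (O ⧸ Ideal.span {a * b}) := by
  set I : Ideal O := Ideal.span {a * b} with hI
  have hle : I ≤ Ideal.span {a} := by
    rw [hI, Ideal.span_singleton_le_span_singleton]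
    exact Dvd.intro b rfl
  -- the map O⧸(b) → O⧸(ab), x ↦ a*x
  have hcond : Ideal.span {b} ≤ LinearMap.ker (I.mkQ.comp (LinearMap.mulLeft O a)) := by
    intro x hx
    obtain ⟨c, rfl⟩ := Ideal.mem_span_singleton'.mp hx
    simp only [LinearMap.mem_ker, LinearMap.comp_apply, LinearMap.mulLeft_apply,
      Submodule.mkQ_apply, Submodule.Quotient.mk_eq_zero]
    rw [hI]
    exact Ideal.mem_span_singleton'.mpr ⟨c, by ring⟩
  set g : (O ⧸ Ideal.span {b}) →ₗ[O] (O ⧸ I) :=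
    Submodule.liftQ _ _ hcond with hg
  have hrange : LinearMap.range g = Submodule.map I.mkQ (Ideal.span {a}) := by
    ext z
    constructor
    · rintro ⟨w, rfl⟩
      obtain ⟨x, rfl⟩ := Submodule.Quotient.mk_surjective _ w
      exact ⟨a * x, Ideal.mem_span_singleton'.mpr ⟨x, by ring⟩, rfl⟩
    · rintro ⟨y, hy, rfl⟩
      obtain ⟨c, rfl⟩ := Ideal.mem_span_singleton'.mp hy
      refine ⟨Submodule.Quotient.mk c, ?_⟩
      show I.mkQ (a * c) = _
      rw [Submodule.mkQ_apply]
      exact congrArg (Submodule.Quotient.mk (p := (I : Submodule O O))) (mul_comm a c)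
  have hfin1 : Finite (LinearMap.range g) :=
    Finite.of_surjective g.rangeRestrict (LinearMap.surjective_rangeRestrict g)
  have hfin2 : Finite ((O ⧸ I) ⧸ LinearMap.range g) := by
    rw [hrange]
    exact Finite.of_equiv _ (Submodule.quotientQuotientEquivQuotient I (Ideal.span {a}) hle).symm.toEquiv
  exact finite_of_finite_quot_finite (LinearMap.range g)

lemma finite_quot_span_of_ne_zero {O : Type*} [CommRing O] [IsDomain O]
    [IsDiscreteValuationRing O] {ϖ : O} (hϖ : Irreducible ϖ)
    (h1 : Finite (O ⧸ Ideal.span {ϖ})) {c : O} (hc : c ≠ 0) :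
    Finite (O ⧸ Ideal.span {c}) := by
  have hpow : ∀ m : ℕ, Finite (O ⧸ Ideal.span {ϖ ^ m}) := by
    intro m
    induction m with
    | zero =>
      rw [pow_zero]
      have : Ideal.span {(1 : O)} = ⊤ := Ideal.span_singleton_one
      have : Subsingleton (O ⧸ Ideal.span {(1:O)}) :=
        Submodule.Quotient.subsingleton_iff.mpr this
      exact Finite.of_subsingleton
    | succ m ih =>
      rw [pow_succ]
      exact finite_quot_span_mul _ _ ih h1
  obtain ⟨m, hm⟩ := IsDiscreteValuationRing.associated_pow_irreducible hc hϖ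
  rw [Ideal.span_singleton_eq_span_singleton.mpr hm]
  exact hpow m

end helpers

/-- If `c•x ∈ p` for all `x` and `O⧸(c)` is finite, then `(ι → O)⧸p` is finite. -/
lemma finite_pi_quot {O : Type*} [CommRing O] {c : O} (hc : Finite (O ⧸ Ideal.span {c}))
    {ι : Type*} [Fintype ι] [DecidableEq ι] (p : Submodule O (ι → O))
    (hp : ∀ x : ι → O, c • x ∈ p) : Finite ((ι → O) ⧸ p) := by
  set q : Submodule O (ι → O) := Submodule.pi Set.univ (fun _ : ι => (Ideal.span {c} : Ideal O))
    with hq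
  have hle : q ≤ p := by
    intro x hx
    have : ∀ i : ι, ∃ a : O, a * c = x i := by
      intro i
      exact Ideal.mem_span_singleton'.mp (hx i (Set.mem_univ i))
    choose y hy using this
    have : x = c • y := by
      funext i
      rw [Pi.smul_apply, smul_eq_mul, mul_comm, hy]
    rw [this]
    exact hp y
  have hfinq : Finite ((ι → O) ⧸ q) := by
    refine Finite.of_equiv _ (Submodule.quotientPi (fun _ : ι => (Ideal.span {c} : Ideal O))).symm.toEquiv
  have hsurj : Surjective (Submodule.mapQ q p LinearMap.id hle) := by
    intro z
    obtain ⟨x, rfl⟩ := Submodule.Quotient.mk_surjective _ z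
    exact ⟨Submodule.Quotient.mk x, by rw [Submodule.mapQ_apply]; rfl⟩
  exact Finite.of_surjective _ hsurj

/-- A f.g. module annihilated by `c` with `O⧸(c)` finite is finite. -/
lemma finite_of_fg_ann {O : Type*} [CommRing O] {c : O} (hc : Finite (O ⧸ Ideal.span {c}))
    {M : Type*} [AddCommGroup M] [Module O M] [Module.Finite O M]
    (hann : ∀ m : M, c • m = 0) : Finite M := by
  obtain ⟨k, f, hf⟩ := Module.Finite.exists_fin' O M
  have hker : ∀ x : Fin k → O, c • x ∈ LinearMap.ker f := by
    intro x
    rw [LinearMap.mem_ker, map_smul, hann]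
  have : Finite ((Fin k → O) ⧸ LinearMap.ker f) := finite_pi_quot hc _ hker
  exact Finite.of_equiv _ (f.quotKerEquivOfSurjective hf).toEquiv

/-- A f.g. torsion module over a domain whose proper principal quotients are finite is finite. -/
lemma finite_of_fg_torsion' {O : Type*} [CommRing O] [IsDomain O]
    {M : Type*} [AddCommGroup M] [Module O M] [Module.Finite O M]
    (htor : ∀ m : M, ∃ c : O, c ≠ 0 ∧ c • m = 0)
    (hquot : ∀ c : O, c ≠ 0 → Finite (O ⧸ Ideal.span {c})) : Finite M := by
  obtain ⟨S, hS⟩ := Module.Finite.fg_top (R := O) (M := M)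
  choose cf hcf0 hcfann using fun m : M => htor m
  set c : O := ∏ m ∈ S, cf m with hc
  have hc0 : c ≠ 0 := Finset.prod_ne_zero_iff.mpr (fun m _ => hcf0 m)
  have hann : ∀ m : M, c • m = 0 := by
    intro m
    have hm : m ∈ Submodule.span O (S : Set M) := hS ▸ Submodule.mem_top
    induction hm using Submodule.span_induction with
    | mem x hx =>
      classical
      have := Finset.mul_prod_erase S cf hx
      rw [hc, ← this, mul_comm, mul_smul, hcfann x, smul_zero]
    | zero => rw [smul_zero]
    | add x y _ _ hx hy => rw [smul_add, hx, hy, add_zero]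
    | smul r x _ hx => rw [smul_comm, hx, smul_zero]
  exact finite_of_fg_ann (hquot c hc0) hann

/-- Key index lemma: if `φ` is injective and maps `H` into itself, then
`[H : φ(H)] = [G : φ(G)]`. -/
lemma relindex_map_eq_index_range {G : Type*} [AddCommGroup G] (φ : G →+ G)
    (hφ : Injective φ) (H : AddSubgroup G) (hmap : H.map φ ≤ H) (hH : H.index ≠ 0) :
    (H.map φ).relIndex H = φ.range.index := by
  have h1 : (H.map φ).index = H.index * φ.range.index := by
    rw [AddSubgroup.index_map, (AddMonoidHom.ker_eq_bot_iff φ).mpr hφ, sup_bot_eq]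
  have h2 : (H.map φ).relIndex H * H.index = (H.map φ).index :=
    AddSubgroup.relIndex_mul_index hmap
  rw [h1] at h2
  exact Nat.eq_of_mul_eq_mul_left (Nat.pos_of_ne_zero hH) (by rw [← h2]; ring)

/-- Bridge: the cardinality of the ring quotient `B⧸(a)` equals the relative index of the
additive subgroup `a·B` inside `B`. -/
lemma bridge {O C : Type*} [CommRing O] [CommRing C] [Algebra O C]
    (B : Subalgebra O C) (a : ↥B) :
    Nat.card (↥B ⧸ (Ideal.span {a} : Ideal ↥B)) =
      (B.toSubring.toAddSubgroup.map
        (AddMonoidHom.mulLeft (a : C))).relIndex B.toSubring.toAddSubgroup := by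
  set H : AddSubgroup C := B.toSubring.toAddSubgroup with hH
  set K : AddSubgroup C := H.map (AddMonoidHom.mulLeft (a : C)) with hK
  let e : ↥B ≃+ ↥H :=
    { toFun := fun x => ⟨x.1, x.2⟩
      invFun := fun x => ⟨x.1, x.2⟩
      left_inv := fun x => rfl
      right_inv := fun x => rfl
      map_add' := fun x y => rfl }
  have ecoe : ∀ y : ↥B, ((e.toAddMonoidHom y : ↥H) : C) = (y : C) := fun _ => rfl
  have hmap : AddSubgroup.map (e : ↥B ≃+ ↥H).toAddMonoidHom
      (Ideal.span ({a} : Set ↥B)).toAddSubgroup = K.addSubgroupOf H := by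
    ext x
    constructor
    · rintro ⟨y, hy, rfl⟩
      obtain ⟨c, hc⟩ := Ideal.mem_span_singleton'.mp hy
      refine ⟨(c : C), c.2, ?_⟩
      show (a : C) * (c : C) = ((e.toAddMonoidHom y : ↥H) : C)
      rw [ecoe, ← hc]
      push_cast
      ring
    · rintro ⟨z, hz, hzx⟩
      refine ⟨(⟨z, hz⟩ : ↥B) * a, Ideal.mem_span_singleton'.mpr ⟨⟨z, hz⟩, rfl⟩, ?_⟩
      apply Subtype.ext
      rw [ecoe]
      show (z : C) * (a : C) = _
      have hx : ((x : ↥H) : C) = H.subtype x := rfl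
      rw [hx, ← hzx]
      exact mul_comm z (a : C)
  have : Nat.card (↥B ⧸ (Ideal.span {a} : Ideal ↥B))
      = (Ideal.span ({a} : Set ↥B)).toAddSubgroup.index := rfl
  rw [this]
  show _ = (K.addSubgroupOf H).index
  unfold AddSubgroup.index
  exact Nat.card_congr (QuotientAddGroup.congr _ _ e hmap).toEquiv

lemma natCard_quot_eq_index' {R M : Type*} [Ring R] [AddCommGroup M] [Module R M]
    (p : Submodule R M) : Nat.card (M ⧸ p) = p.toAddSubgroup.index := rfl

/-- The additive range of left multiplication agrees with the linear one. -/
lemma addRange_mulLeft_eq {O C : Type*} [CommRing O] [CommRing C] [Algebra O C] (b : C) :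
    (LinearMap.range (LinearMap.mulLeft O b)).toAddSubgroup
      = (AddMonoidHom.mulLeft b).range := by
  ext x
  simp [AddMonoidHom.mem_range, LinearMap.mem_range]

lemma index_range_mulLeft_eq {O C : Type*} [CommRing O] [CommRing C] [Algebra O C] (b : C) :
    (AddMonoidHom.mulLeft b).range.index
      = Nat.card (C ⧸ LinearMap.range (LinearMap.mulLeft O b)) := by
  rw [natCard_quot_eq_index', addRange_mulLeft_eq]

lemma card_quot_mulLeft_pi {O : Type*} [CommRing O] {s : ℕ} {n : Fin s → ℕ}
    (b : ∀ i : Fin s, Fin (n i) → O) :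
    Nat.card ((∀ i : Fin s, Fin (n i) → O) ⧸ LinearMap.range (LinearMap.mulLeft O b))
      = ∏ i : Fin s, Nat.card ((Fin (n i) → O) ⧸ LinearMap.range (LinearMap.mulLeft O (b i))) := by
  have hrange : LinearMap.range (LinearMap.mulLeft O b)
      = Submodule.pi Set.univ (fun i => LinearMap.range (LinearMap.mulLeft O (b i))) := by
    ext x
    simp only [LinearMap.mem_range, LinearMap.mulLeft_apply, Submodule.mem_pi, Set.mem_univ,
      forall_true_left]
    constructor
    · rintro ⟨y, rfl⟩ i
      exact ⟨y i, rfl⟩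
    · intro h
      choose y hy using h
      exact ⟨y, funext fun i => hy i⟩
  rw [hrange, Nat.card_congr (Submodule.quotientPi
    (fun i => LinearMap.range (LinearMap.mulLeft O (b i)))).toEquiv, Nat.card_pi]

lemma finite_quot_mulLeft {O : Type*} [CommRing O] [IsDomain O] {ι : Type*} [Fintype ι]
    [DecidableEq ι] (b : ι → O) (hb : ∀ j, b j ≠ 0)
    (hquot : ∀ c : O, c ≠ 0 → Finite (O ⧸ Ideal.span {c})) :
    Finite ((ι → O) ⧸ LinearMap.range (LinearMap.mulLeft O b)) := by
  set c : O := ∏ j, b j with hc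
  have hc0 : c ≠ 0 := Finset.prod_ne_zero_iff.mpr (fun j _ => hb j)
  have hd : ∀ j, b j ∣ c := fun j => Finset.dvd_prod_of_mem b (Finset.mem_univ j)
  choose d hd' using hd
  refine finite_pi_quot (hquot c hc0) _ ?_
  intro x
  refine ⟨fun j => d j * x j, ?_⟩
  funext j
  show b j * (d j * x j) = c * x j
  rw [← mul_assoc, ← hd' j]
lemma range_finite_of_vanish {R V : Type*} [CommRing R] (f : R → V) (I : Ideal R)
    [Finite (R ⧸ I)] (hf : ∀ x y : R, x - y ∈ I → f x = f y) : (Set.range f).Finite := by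
  have hsub : Set.range f ⊆ Set.range (fun z : R ⧸ I => f (Quotient.out z)) := by
    rintro _ ⟨x, rfl⟩
    refine ⟨Ideal.Quotient.mk I x, hf _ _ ?_⟩
    rw [← Ideal.Quotient.eq_zero_iff_mem, map_sub,
      show Ideal.Quotient.mk I (Quotient.out ((Ideal.Quotient.mk I) x))
        = Ideal.Quotient.mk I x from Quotient.out_eq _, sub_self]
  exact Set.Finite.subset (Set.finite_range _) hsub


/-- The projection `T →ₐ[O] A_i = O^{n_i}` obtained by composing the inclusion of the
subalgebra `T ⊆ A = ∏ i, O^{n_i}` with the canonical projection `φ_i : A → A_i`. -/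
noncomputable def projAlgHom {O : Type*} [CommRing O] {s : ℕ} {n : Fin s → ℕ}
    (T : Subalgebra O (∀ i : Fin s, Fin (n i) → O)) (i : Fin s) :
    T →ₐ[O] (Fin (n i) → O) :=
  (Pi.evalAlgHom O (fun i => Fin (n i) → O) i).comp T.val

/-- Lemma (principal lemma): with `O` a DVR, `A = ∏_{i=1}^s O^{n_i}`, `T ⊆ A` a local
complete `O`-subalgebra of full rank, `J ⊆ T` an ideal of finite index, `T_i = φ_i(T)`,
`J_i = φ_i(J)`: if `α ∈ J` is such that each `α_i := φ_i(α)` generates `J_i` as an ideal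
of `T_i`, then `#T/J ≤ #T/αT = ∏_{i=1}^s #T_i/α_i T_i`. -/
theorem card_quot_le_card_quot_span_eq_prod
    {O : Type*} [CommRing O] [IsDomain O] [IsDiscreteValuationRing O]
    {s : ℕ} {n : Fin s → ℕ} (hn : ∀ i, 0 < n i)
    (T : Subalgebra O (∀ i : Fin s, Fin (n i) → O))
    [IsLocalRing T] [IsAdicComplete (IsLocalRing.maximalIdeal T) T]
    (hfull : ∀ a : (∀ i : Fin s, Fin (n i) → O), ∃ c : O, c ≠ 0 ∧ c • a ∈ T)
    (J : Ideal T) [Finite (T ⧸ J)]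
    (α : T) (hα : α ∈ J)
    (hgen : ∀ i : Fin s,
      Ideal.map (projAlgHom T i).rangeRestrict J
        = Ideal.span {(projAlgHom T i).rangeRestrict α}) :
    Nat.card (T ⧸ J) ≤ Nat.card (T ⧸ Ideal.span {α}) ∧
    Nat.card (T ⧸ Ideal.span {α}) =
      ∏ i : Fin s, Nat.card
        ((projAlgHom T i).range ⧸ Ideal.span {(projAlgHom T i).rangeRestrict α}) := by
  classical
  by_cases hJ : J = ⊤
  · -- `J = ⊤`: every `αᵢ` is a unit, hence `α` is a unit and all quotients are trivial.
    have hcardJ : Nat.card (↥T ⧸ J) = 1 := by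
      have : Subsingleton (↥T ⧸ J) := Submodule.Quotient.subsingleton_iff.mpr hJ
      exact Nat.card_eq_one_iff_unique.mpr ⟨this, inferInstance⟩
    have hspan_top : ∀ i, Ideal.span {(projAlgHom T i).rangeRestrict α} = ⊤ := by
      intro i
      rw [← hgen i, hJ, Ideal.map_top]
    -- `α` is a unit in `T`
    have hs : 0 < s := by
      by_contra hs
      have hs0 : s = 0 := by omega
      subst hs0
      have : Subsingleton (∀ i : Fin 0, Fin (n i) → O) := by
        constructor; intro a b; funext i; exact absurd i.2 (by omega)
      have : Subsingleton ↥T := ⟨fun a b => Subtype.ext (Subsingleton.elim _ _)⟩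
      exact false_of_nontrivial_of_subsingleton ↥T
    set i₀ : Fin s := ⟨0, hs⟩
    haveI : Nonempty (Fin (n i₀)) := ⟨⟨0, hn i₀⟩⟩
    haveI : Nontrivial ((projAlgHom T i₀).range) := by
      refine nontrivial_of_ne 1 0 (fun h => ?_)
      have h1 : (1 : Fin (n i₀) → O) = 0 := congrArg Subtype.val h
      exact one_ne_zero (congrFun h1 ⟨0, hn i₀⟩)
    have hu : IsUnit ((projAlgHom T i₀).rangeRestrict α) :=
      Ideal.span_singleton_eq_top.mp (hspan_top i₀)
    obtain ⟨u, hu'⟩ := hu.exists_right_inv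
    obtain ⟨t, ht⟩ := AlgHom.rangeRestrict_surjective (projAlgHom T i₀) u
    have hkerle : RingHom.ker (projAlgHom T i₀).rangeRestrict
        ≤ IsLocalRing.maximalIdeal ↥T := by
      refine IsLocalRing.le_maximalIdeal (fun h => ?_)
      have h1 : (1 : ↥T) ∈ RingHom.ker (projAlgHom T i₀).rangeRestrict := h ▸ trivial
      rw [RingHom.mem_ker, map_one] at h1
      exact one_ne_zero h1
    have hαu : IsUnit α := by
      by_contra hnu
      have hm : α ∈ IsLocalRing.maximalIdeal ↥T :=
        (IsLocalRing.mem_maximalIdeal α).mpr (mem_nonunits_iff.mpr hnu)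
      have hker : α * t - 1 ∈ RingHom.ker (projAlgHom T i₀).rangeRestrict := by
        rw [RingHom.mem_ker, map_sub, map_mul, map_one, ht, hu', sub_self]
      have h1m : (1 : ↥T) ∈ IsLocalRing.maximalIdeal ↥T := by
        have := Ideal.sub_mem _ (Ideal.mul_mem_right t _ hm) (hkerle hker)
        simpa using this
      exact (Ideal.IsMaximal.ne_top (IsLocalRing.maximalIdeal.isMaximal ↥T))
        ((Ideal.eq_top_iff_one _).mpr h1m)
    have hspanα : Ideal.span {α} = ⊤ := Ideal.span_singleton_eq_top.mpr hαu
    have hcardα : Nat.card (↥T ⧸ Ideal.span {α}) = 1 := by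
      have : Subsingleton (↥T ⧸ Ideal.span {α}) :=
        Submodule.Quotient.subsingleton_iff.mpr hspanα
      exact Nat.card_eq_one_iff_unique.mpr ⟨this, inferInstance⟩
    have hcards : ∀ i, Nat.card
        ((projAlgHom T i).range ⧸ Ideal.span {(projAlgHom T i).rangeRestrict α}) = 1 := by
      intro i
      have : Subsingleton ((projAlgHom T i).range ⧸
          Ideal.span {(projAlgHom T i).rangeRestrict α}) :=
        Submodule.Quotient.subsingleton_iff.mpr (hspan_top i)
      exact Nat.card_eq_one_iff_unique.mpr ⟨this, inferInstance⟩
    refine ⟨by rw [hcardJ, hcardα], by rw [hcardα, Finset.prod_congr rfl (fun i _ => hcards i),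
      Finset.prod_const_one]⟩
  ·
    -- MAIN CASE: J ≠ ⊤
    haveI : Infinite O := infinite_of_dvr
    obtain ⟨ϖ, hϖ⟩ := IsDiscreteValuationRing.exists_irreducible O
    -- the residue ring `O⧸(c)` is finite for every `c ≠ 0`
    set f0 : O →+* (↥T ⧸ J) := (Ideal.Quotient.mk J).comp (algebraMap O ↥T) with hf0
    haveI : Nontrivial (↥T ⧸ J) := Ideal.Quotient.nontrivial_iff.mpr hJ
    have hker0 : RingHom.ker f0 ≠ ⊥ := by
      intro h
      have hinj : Function.Injective f0 := (RingHom.injective_iff_ker_eq_bot f0).mpr h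
      have : Finite O := Finite.of_injective f0 hinj
      exact not_finite O
    have hker_top : RingHom.ker f0 ≠ ⊤ := RingHom.ker_ne_top f0
    have hresfin : Finite (O ⧸ RingHom.ker f0) :=
      Finite.of_injective _ (RingHom.kerLift_injective f0)
    have hres : Finite (O ⧸ Ideal.span {ϖ}) := by
      have hle : RingHom.ker f0 ≤ Ideal.span {ϖ} := by
        rw [← hϖ.maximalIdeal_eq]
        exact IsLocalRing.le_maximalIdeal hker_top
      refine Finite.of_surjective (Ideal.Quotient.factor hle) ?_
      intro z
      obtain ⟨x, rfl⟩ := Ideal.Quotient.mk_surjective z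
      exact ⟨Ideal.Quotient.mk _ x, Ideal.Quotient.factor_mk hle x⟩
    have hquot : ∀ c : O, c ≠ 0 → Finite (O ⧸ Ideal.span {c}) :=
      fun c hc => finite_quot_span_of_ne_zero hϖ hres hc
    -- notation
    set β : (∀ i : Fin s, Fin (n i) → O) := (α : ∀ i : Fin s, Fin (n i) → O) with hβv
    -- finiteness of the component quotients Bᵢ⧸(αᵢ)
    have hfinB : ∀ i, Finite ((projAlgHom T i).range ⧸
        Ideal.span {(projAlgHom T i).rangeRestrict α}) := by
      intro i
      rw [← hgen i]
      exact Finite.of_surjective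
        (Ideal.quotientMap (Ideal.map (projAlgHom T i).rangeRestrict J)
          ((projAlgHom T i).rangeRestrict : ↥T →+* (projAlgHom T i).range) Ideal.le_comap_map)
        (Ideal.quotientMap_surjective (AlgHom.rangeRestrict_surjective _))
    -- all coordinates of β are nonzero
    have hcoe : ∀ i, (((projAlgHom T i).rangeRestrict α : (projAlgHom T i).range) :
        Fin (n i) → O) = β i := fun i => rfl
    have hβne : ∀ i j, β i j ≠ 0 := by
      intro i j h0
      set Bi := (projAlgHom T i).range with hBi
      set Ii : Ideal ↥Bi := Ideal.span {(projAlgHom T i).rangeRestrict α} with hIi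
      set ev : ↥Bi →ₗ[O] O :=
        (LinearMap.proj j).comp ((Subalgebra.toSubmodule Bi).subtype) with hev
      have hkerev : ∀ x : ↥Bi, x ∈ Ii → ev x = 0 := by
        intro x hx
        obtain ⟨d, hd⟩ := Ideal.mem_span_singleton'.mp (hIi ▸ hx)
        have : (x : Fin (n i) → O) = (d : Fin (n i) → O) * β i := by
          rw [← hd]; push_cast [hcoe i]; rfl
        show (x : Fin (n i) → O) j = 0
        rw [this]
        show (d : Fin (n i) → O) j * β i j = 0
        rw [h0, mul_zero]
      -- range of ev is finite
      haveI : Finite (↥Bi ⧸ Ii) := hfinB i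
      have hfinrange : (Set.range ev).Finite := by
        refine range_finite_of_vanish ev Ii (fun x y hxy => ?_)
        have := hkerev _ hxy
        rwa [map_sub, sub_eq_zero] at this
      -- but the range contains `O·c` for some nonzero `c`, hence is infinite
      set v : ∀ i' : Fin s, Fin (n i') → O := Pi.single i (Pi.single j (1:O)) with hv
      obtain ⟨c, hc0, hcT⟩ := hfull v
      set b : ↥Bi := (projAlgHom T i).rangeRestrict ⟨_, hcT⟩ with hb
      have hevb : ev b = c := by
        show (c • v) i j = c
        rw [hv]
        simp [Pi.single_eq_same]
      have hinf : (Set.range ev).Infinite := by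
        refine Set.infinite_of_injective_forall_mem (f := fun y : O => y * c) ?_ ?_
        · exact fun y₁ y₂ h => mul_right_cancel₀ hc0 h
        · intro y
          exact ⟨y • b, by rw [map_smul, hevb, smul_eq_mul]⟩
      exact hinf hfinrange
    -- key index computations
    set H : AddSubgroup (∀ i : Fin s, Fin (n i) → O) := T.toSubring.toAddSubgroup with hH
    set φ : (∀ i : Fin s, Fin (n i) → O) →+ (∀ i : Fin s, Fin (n i) → O) :=
      AddMonoidHom.mulLeft β with hφ
    have hφinj : Function.Injective φ := by
      intro x y hxy
      funext i j
      have := congrFun (congrFun hxy i) j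
      exact mul_left_cancel₀ (hβne i j) this
    have hmapT : H.map φ ≤ H := by
      rintro _ ⟨x, hx, rfl⟩
      exact T.mul_mem α.2 hx
    have hHfin : Finite ((∀ i : Fin s, Fin (n i) → O) ⧸ Subalgebra.toSubmodule T) := by
      refine finite_of_fg_torsion' ?_ hquot
      intro m
      obtain ⟨x, rfl⟩ := Submodule.Quotient.mk_surjective _ m
      obtain ⟨c, hc0, hcT⟩ := hfull x
      refine ⟨c, hc0, ?_⟩
      rw [← Submodule.Quotient.mk_smul, Submodule.Quotient.mk_eq_zero]
      exact hcT
    have hHidx : H.index ≠ 0 := by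
      have h1 : Nat.card ((∀ i : Fin s, Fin (n i) → O) ⧸ Subalgebra.toSubmodule T)
          = H.index := natCard_quot_eq_index' _
      rw [← h1]
      exact Nat.card_ne_zero.mpr ⟨inferInstance, hHfin⟩
    have main1 : Nat.card (↥T ⧸ Ideal.span {α}) = φ.range.index := by
      rw [bridge T α]
      exact relindex_map_eq_index_range φ hφinj H hmapT hHidx
    -- per-component
    have main2 : ∀ i, Nat.card ((projAlgHom T i).range ⧸
        Ideal.span {(projAlgHom T i).rangeRestrict α})
        = (AddMonoidHom.mulLeft (β i)).range.index := by
      intro i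
      set Bi := (projAlgHom T i).range with hBi
      set φi : (Fin (n i) → O) →+ (Fin (n i) → O) := AddMonoidHom.mulLeft (β i) with hφi
      set Hi : AddSubgroup (Fin (n i) → O) := Bi.toSubring.toAddSubgroup with hHi
      have hφiinj : Function.Injective φi := by
        intro x y hxy
        funext j
        exact mul_left_cancel₀ (hβne i j) (congrFun hxy j)
      have hmapi : Hi.map φi ≤ Hi := by
        rintro _ ⟨x, hx, rfl⟩
        have hβmem : β i ∈ Bi := by
          rw [← hcoe i]; exact ((projAlgHom T i).rangeRestrict α).2
        exact Bi.mul_mem hβmem hx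
      have hHifin : Finite ((Fin (n i) → O) ⧸ Subalgebra.toSubmodule Bi) := by
        refine finite_of_fg_torsion' ?_ hquot
        intro m
        obtain ⟨x, rfl⟩ := Submodule.Quotient.mk_surjective _ m
        set w : ∀ i' : Fin s, Fin (n i') → O := Pi.single i x with hw
        obtain ⟨c, hc0, hcT⟩ := hfull w
        refine ⟨c, hc0, ?_⟩
        rw [← Submodule.Quotient.mk_smul, Submodule.Quotient.mk_eq_zero]
        refine ⟨⟨c • w, hcT⟩, ?_⟩
        show (c • w) i = c • x
        rw [hw]
        simp [Pi.single_eq_same]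
      have hHiidx : Hi.index ≠ 0 := by
        have h1 : Nat.card ((Fin (n i) → O) ⧸ Subalgebra.toSubmodule Bi)
            = Hi.index := natCard_quot_eq_index' _
        rw [← h1]
        exact Nat.card_ne_zero.mpr ⟨inferInstance, hHifin⟩
      have := bridge Bi ((projAlgHom T i).rangeRestrict α)
      rw [hcoe i] at this
      rw [this]
      exact relindex_map_eq_index_range φi hφiinj Hi hmapi hHiidx
    -- product formula
    have hprod : φ.range.index = ∏ i : Fin s, (AddMonoidHom.mulLeft (β i)).range.index := by
      rw [hφ, index_range_mulLeft_eq (O := O) β, card_quot_mulLeft_pi β]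
      exact Finset.prod_congr rfl (fun i _ => (index_range_mulLeft_eq (O := O) (β i)).symm)
    have hmain : Nat.card (↥T ⧸ Ideal.span {α}) =
        ∏ i : Fin s, Nat.card ((projAlgHom T i).range ⧸
          Ideal.span {(projAlgHom T i).rangeRestrict α}) := by
      rw [main1, hprod]
      exact (Finset.prod_congr rfl (fun i _ => (main2 i))).symm
    -- finiteness of T⧸(α) and the inequality
    have hcomp_ne : ∀ i : Fin s, (AddMonoidHom.mulLeft (β i)).range.index ≠ 0 := by
      intro i
      rw [index_range_mulLeft_eq (O := O) (β i)]
      have : Finite ((Fin (n i) → O) ⧸ LinearMap.range (LinearMap.mulLeft O (β i))) :=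
        finite_quot_mulLeft (β i) (hβne i) hquot
      exact Nat.card_ne_zero.mpr ⟨inferInstance, this⟩
    have hcard_ne : Nat.card (↥T ⧸ Ideal.span {α}) ≠ 0 := by
      rw [main1, hprod]
      exact Finset.prod_ne_zero_iff.mpr (fun i _ => hcomp_ne i)
    haveI hfinα : Finite (↥T ⧸ Ideal.span {α}) := Nat.finite_of_card_ne_zero hcard_ne
    have hle : Ideal.span {α} ≤ J := Ideal.span_le.mpr (Set.singleton_subset_iff.mpr hα)
    have hsurj : Function.Surjective (Ideal.Quotient.factor hle) := by
      intro z
      obtain ⟨x, rfl⟩ := Ideal.Quotient.mk_surjective z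
      exact ⟨Ideal.Quotient.mk _ x, Ideal.Quotient.factor_mk hle x⟩
    exact ⟨Nat.card_le_card_of_surjective _ hsurj, hmain⟩
end

section
/- Let O be a DVR with residue field F, A = O^n = A_1 × ... × A_s with A_i = O^{n_i}, T ⊆ A a local complete O-subalgebra of full O-rank, and J ⊆ T an ideal of finite index. If #F^× ≥ s−1 and each J_i = φ_i(J) is a principal ideal of T_i = φ_i(T), then #∏_{i=1}^s T_i/J_i ≥ #T/J. -/
set_option synthInstance.maxHeartbeats 400000

/-- The ring quotient by the principal ideal `(x)` agrees with the additive quotient by the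
range of multiplication by `x`. -/
lemma card_quot_span_singleton {B : Type*} [CommRing B] (x : B) :
    Nat.card (B ⧸ Ideal.span {x}) = (AddMonoidHom.mulLeft x).range.index := by
  apply Nat.card_congr
  refine Quotient.congr (Equiv.refl B) ?_
  intro a b
  change Submodule.quotientRel (Ideal.span {x}) a b ↔ QuotientAddGroup.leftRel _ a b
  rw [Submodule.quotientRel_def, QuotientAddGroup.leftRel_apply]
  constructor
  · intro h
    rcases Ideal.mem_span_singleton.mp h with ⟨c, hc⟩
    exact ⟨-c, by simp [AddMonoidHom.mulLeft, ← hc]; ring⟩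
  · rintro ⟨c, hc⟩
    refine Ideal.mem_span_singleton.mpr ⟨-c, ?_⟩
    have : x * c = -a + b := hc
    linear_combination this

/-- Lattice-independence of the index of the image of an injective endomorphism. -/
lemma index_range_restrict {G A : Type*} [AddCommGroup G] [AddCommGroup A]
    (ι : G →+ A) (hι : Function.Injective ι) (hidx : ι.range.index ≠ 0)
    (φ : A →+ A) (hφ : Function.Injective φ)
    (ψ : G →+ G) (hcomm : ∀ g : G, ι (ψ g) = φ (ι g)) :
    ψ.range.index = φ.range.index := by
  have hmapeq : ψ.range.map ι = AddSubgroup.map φ ι.range := by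
    ext z
    simp only [AddSubgroup.mem_map, AddMonoidHom.mem_range]
    constructor
    · rintro ⟨w, ⟨g, rfl⟩, rfl⟩
      exact ⟨ι g, ⟨g, rfl⟩, (hcomm g).symm⟩
    · rintro ⟨w, ⟨g, rfl⟩, rfl⟩
      exact ⟨ψ g, ⟨g, rfl⟩, hcomm g⟩
  have hle : ψ.range.map ι ≤ ι.range := by
    rintro z ⟨w, hw, rfl⟩
    exact ⟨w, rfl⟩
  -- ψ.range.index equals the relative index of the image inside ι.range
  have e1 : ψ.range.index = (ψ.range.map ι).relIndex ι.range := by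
    have e : G ⧸ ψ.range ≃+ (↥ι.range) ⧸ ((ψ.range.map ι).addSubgroupOf ι.range) := by
      refine QuotientAddGroup.congr _ _ (AddMonoidHom.ofInjective hι) ?_
      ext w
      simp only [AddSubgroup.mem_map, AddMonoidHom.mem_range, AddSubgroup.mem_addSubgroupOf]
      constructor
      · rintro ⟨v, ⟨g, rfl⟩, rfl⟩
        exact ⟨ψ g, ⟨g, rfl⟩, rfl⟩
      · rintro ⟨v, ⟨g, rfl⟩, hv⟩
        refine ⟨ψ g, ⟨g, rfl⟩, ?_⟩
        apply Subtype.ext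
        rw [← hv]
        rfl
    unfold AddSubgroup.relIndex AddSubgroup.index
    exact Nat.card_congr e.toEquiv
  have h2 := AddSubgroup.relIndex_mul_index hle
  rw [hmapeq, AddSubgroup.index_map, (AddMonoidHom.ker_eq_bot_iff φ).mpr hφ, sup_bot_eq] at h2
  rw [e1, hmapeq]
  exact Nat.eq_of_mul_eq_mul_right (Nat.pos_of_ne_zero hidx) (by rw [h2, mul_comm])

lemma index_range_comp {A : Type*} [AddCommGroup A] (f g : A →+ A) (hf : Function.Injective f) :
    (f.comp g).range.index = g.range.index * f.range.index := by
  rw [AddMonoidHom.range_comp, AddSubgroup.index_map,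
    (AddMonoidHom.ker_eq_bot_iff f).mpr hf, sup_bot_eq]

lemma index_range_mulLeft_pow {R : Type*} [CommRing R] (x : R)
    (hx : Function.Injective fun a : R => x * a) (m : ℕ) :
    (AddMonoidHom.mulLeft (x ^ m)).range.index = ((AddMonoidHom.mulLeft x).range.index) ^ m := by
  induction m with
  | zero =>
    simp only [pow_zero]
    have : (AddMonoidHom.mulLeft (1 : R)).range = ⊤ := by
      ext z; simp [AddMonoidHom.mem_range]
    rw [this, AddSubgroup.index_top]
  | succ m ih =>
    have hcomp : AddMonoidHom.mulLeft (x ^ (m + 1)) =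
        (AddMonoidHom.mulLeft x).comp (AddMonoidHom.mulLeft (x ^ m)) := by
      ext a; simp [AddMonoidHom.mulLeft, pow_succ]; ring
    rw [hcomp, index_range_comp _ _ hx, ih, pow_succ]

lemma range_mulLeft_of_associated {R : Type*} [CommRing R] {x y : R} (h : Associated x y) :
    (AddMonoidHom.mulLeft x).range = (AddMonoidHom.mulLeft y).range := by
  obtain ⟨u, rfl⟩ := h
  ext z
  simp only [AddMonoidHom.mem_range]
  constructor
  · rintro ⟨a, rfl⟩
    refine ⟨(u⁻¹ : Rˣ) * a, ?_⟩
    show x * u * ((u⁻¹ : Rˣ) * a) = x * a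
    have : ((u : R) * ((u⁻¹ : Rˣ) * a)) = a := by
      rw [← mul_assoc]; simp
    rw [mul_assoc, this]
  · rintro ⟨a, rfl⟩
    refine ⟨(u : R) * a, ?_⟩
    show x * ((u : R) * a) = x * (u : R) * a
    ring

lemma index_range_mulLeft_ne_zero {O : Type*} [CommRing O] [IsDomain O]
    [IsDiscreteValuationRing O] [Finite (IsLocalRing.ResidueField O)]
    {c : O} (hc : c ≠ 0) : (AddMonoidHom.mulLeft c).range.index ≠ 0 := by
  obtain ⟨ϖ, hϖ⟩ := IsDiscreteValuationRing.exists_irreducible O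
  obtain ⟨m, hm⟩ := IsDiscreteValuationRing.associated_pow_irreducible hc hϖ
  rw [range_mulLeft_of_associated hm]
  have hϖinj : Function.Injective fun a : O => ϖ * a :=
    fun a b hab => mul_left_cancel₀ hϖ.ne_zero hab
  rw [index_range_mulLeft_pow ϖ hϖinj m]
  apply pow_ne_zero
  have hbase : (AddMonoidHom.mulLeft ϖ).range.index = Nat.card (O ⧸ Ideal.span {ϖ}) :=
    (card_quot_span_singleton ϖ).symm
  rw [hbase, ← (IsDiscreteValuationRing.irreducible_iff_uniformizer ϖ).mp hϖ]
  exact Nat.card_ne_zero.mpr ⟨⟨0⟩, by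
    exact Finite.of_equiv (IsLocalRing.ResidueField O) (Equiv.refl _)⟩

lemma index_range_mulLeft_pi {ι : Type*} [Fintype ι] {R : ι → Type*} [∀ i, CommRing (R i)]
    (x : ∀ i, R i) :
    (AddMonoidHom.mulLeft x).range.index
      = ∏ i, (AddMonoidHom.mulLeft (x i)).range.index := by
  classical
  let Q : ι → Type _ := fun i => (R i) ⧸ (AddMonoidHom.mulLeft (x i)).range
  let ρ : (∀ i, R i) →+ (∀ i, Q i) :=
    { toFun := fun a i => QuotientAddGroup.mk (a i)
      map_zero' := by funext i; rfl
      map_add' := by intro a b; funext i; rfl }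
  have hsurj : Function.Surjective ρ := by
    intro v
    have : ∀ i, ∃ b : R i, QuotientAddGroup.mk b = v i := fun i =>
      QuotientAddGroup.mk'_surjective _ (v i)
    choose b hb using this
    exact ⟨b, funext hb⟩
  have hker : ρ.ker = (AddMonoidHom.mulLeft x).range := by
    ext a
    simp only [AddMonoidHom.mem_ker, AddMonoidHom.mem_range]
    constructor
    · intro h
      have h' : ∀ i, ∃ b : R i, x i * b = a i := by
        intro i
        have : QuotientAddGroup.mk (a i) = (0 : Q i) := congrFun h i
        have := (QuotientAddGroup.eq_zero_iff (a i)).mp this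
        rcases this with ⟨b, hb⟩
        exact ⟨b, hb⟩
      choose b hb using h'
      exact ⟨b, funext hb⟩
    · rintro ⟨b, rfl⟩
      funext i
      exact (QuotientAddGroup.eq_zero_iff _).mpr ⟨b i, rfl⟩
  have := QuotientAddGroup.quotientKerEquivOfSurjective ρ hsurj
  calc (AddMonoidHom.mulLeft x).range.index = Nat.card ((∀ i, R i) ⧸ ρ.ker) := by rw [hker]; rfl
    _ = Nat.card (∀ i, Q i) := Nat.card_congr this.toEquiv
    _ = ∏ i, Nat.card (Q i) := Nat.card_pi
    _ = ∏ i, (AddMonoidHom.mulLeft (x i)).range.index := rfl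

/-- Avoidance lemma: given at most `#F` "linear conditions" on a pair of scalars, one can
choose a pair of scalars satisfying all of them. -/
lemma exists_good_pair {F : Type*} [Field F] [Fintype F] {ι : Type*} [DecidableEq ι]
    (S : Finset ι) (hS : S.card ≤ Fintype.card F)
    {k : ι → Type*} [∀ i, Field (k i)] (χ : ∀ i, F →+* k i)
    (x y : ∀ i, k i) (hxy : ∀ i ∈ S, x i ≠ 0 ∨ y i ≠ 0) :
    ∃ a b : F, ∀ i ∈ S, χ i a * x i + χ i b * y i ≠ 0 := by
  classical
  let v : Option F → F × F := fun d => Option.elim d (0, 1) (fun c => (1, c))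
  let bad : ι → Finset (Option F) :=
    fun i => Finset.univ.filter (fun d => χ i (v d).1 * x i + χ i (v d).2 * y i = 0)
  have hbad : ∀ i ∈ S, (bad i).card ≤ 1 := by
    intro i hi
    apply Finset.card_le_one.mpr
    intro d hd d' hd'
    rw [Finset.mem_filter] at hd hd'
    have hd := hd.2
    have hd' := hd'.2
    by_contra hne
    have hzero : x i = 0 ∧ y i = 0 := by
      match d, d' with
      | none, none => exact absurd rfl hne
      | some c, some c' =>
        simp only [v, Option.elim] at hd hd'
        rw [map_one, one_mul] at hd hd'
        have hcc : c ≠ c' := fun h => hne (by rw [h])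
        have hsub : (χ i c - χ i c') * y i = 0 := by
          linear_combination hd - hd'
        have hky : y i = 0 := by
          rcases mul_eq_zero.mp hsub with h | h
          · exfalso
            apply hcc
            apply (χ i).injective
            rwa [← sub_eq_zero]
          · exact h
        have hkx : x i = 0 := by
          rw [hky, mul_zero, add_zero] at hd
          exact hd
        exact ⟨hkx, hky⟩
      | none, some c =>
        simp only [v, Option.elim] at hd hd'
        rw [map_zero, zero_mul, map_one, one_mul, zero_add] at hd
        rw [map_one, one_mul, hd, mul_zero, add_zero] at hd'
        exact ⟨hd', hd⟩
      | some c, none =>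
        simp only [v, Option.elim] at hd hd'
        rw [map_zero, zero_mul, map_one, one_mul, zero_add] at hd'
        rw [map_one, one_mul, hd', mul_zero, add_zero] at hd
        exact ⟨hd, hd'⟩
    rcases hxy i hi with h | h
    · exact h hzero.1
    · exact h hzero.2
  have hcard : (S.biUnion bad).card < Fintype.card (Option F) := by
    calc (S.biUnion bad).card ≤ ∑ i ∈ S, (bad i).card := Finset.card_biUnion_le
      _ ≤ ∑ _i ∈ S, 1 := Finset.sum_le_sum hbad
      _ = S.card := by simp
      _ ≤ Fintype.card F := hS
      _ < Fintype.card (Option F) := by rw [Fintype.card_option]; omega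
  obtain ⟨d, hd⟩ : ∃ d, d ∉ S.biUnion bad := by
    by_contra h
    push_neg at h
    have : (Finset.univ : Finset (Option F)) ⊆ S.biUnion bad := fun z _ => h z
    have := Finset.card_le_card this
    rw [Finset.card_univ] at this
    omega
  refine ⟨(v d).1, (v d).2, fun i hi h0 => hd ?_⟩
  exact Finset.mem_biUnion.mpr ⟨i, hi, Finset.mem_filter.mpr ⟨Finset.mem_univ _, h0⟩⟩

set_option maxHeartbeats 2000000 in
/-- Theorem: with `O` a DVR with residue field `F`, `A = ∏_{i=1}^s O^{n_i}`, `T ⊆ A` a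
local complete `O`-subalgebra of full rank and `J ⊆ T` an ideal of finite index, if
`#F^× ≥ s - 1` and each `J_i = φ_i(J)` is a principal ideal of `T_i = φ_i(T)`, then
`#∏_{i=1}^s T_i/J_i ≥ #T/J`. -/
theorem prod_card_quot_ge_card_quot
    {O : Type*} [CommRing O] [IsDomain O] [IsDiscreteValuationRing O]
    {s : ℕ} {n : Fin s → ℕ} (hn : ∀ i, 0 < n i)
    (T : Subalgebra O (∀ i : Fin s, Fin (n i) → O))
    [IsLocalRing T] [IsAdicComplete (IsLocalRing.maximalIdeal T) T]
    (hfull : ∀ a : (∀ i : Fin s, Fin (n i) → O), ∃ c : O, c ≠ 0 ∧ c • a ∈ T)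
    (J : Ideal T) [Finite (T ⧸ J)]
    (hres : s - 1 ≤ Nat.card (IsLocalRing.ResidueField O)ˣ)
    (hprin : ∀ i : Fin s, (Ideal.map (projAlgHom T i).rangeRestrict J).IsPrincipal) :
    Nat.card (T ⧸ J) ≤
      ∏ i : Fin s, Nat.card
        ((projAlgHom T i).range ⧸ Ideal.map (projAlgHom T i).rangeRestrict J) := by
  classical
  let Ti : ∀ i : Fin s, Subalgebra O (Fin (n i) → O) := fun i => (projAlgHom T i).range
  let π : ∀ i : Fin s, (T →ₐ[O] (Ti i)) := fun i => (projAlgHom T i).rangeRestrict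
  have hπs : ∀ i, Function.Surjective (π i) := fun i => AlgHom.rangeRestrict_surjective _
  show Nat.card (T ⧸ J) ≤ ∏ i : Fin s, Nat.card ((Ti i) ⧸ Ideal.map (π i) J)
  -- each quotient T_i / J_i is finite
  have hfinq : ∀ i : Fin s, Finite ((Ti i) ⧸ Ideal.map (π i) J) := by
    intro i
    have hkill : ∀ a : T, a ∈ J →
        (Ideal.Quotient.mk (Ideal.map (π i) J)).comp (π i : T →+* Ti i) a = 0 := by
      intro a ha
      simp only [RingHom.comp_apply, Ideal.Quotient.eq_zero_iff_mem]
      exact Ideal.mem_map_of_mem _ ha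
    have hsurj : Function.Surjective
        (Ideal.Quotient.lift J _ hkill) := by
      intro z
      obtain ⟨y, rfl⟩ := Ideal.Quotient.mk_surjective z
      obtain ⟨w, rfl⟩ := hπs i y
      exact ⟨Ideal.Quotient.mk J w, rfl⟩
    exact Finite.of_surjective _ hsurj
  have hqne : ∀ i : Fin s, Nat.card ((Ti i) ⧸ Ideal.map (π i) J) ≠ 0 :=
    fun i => Nat.card_ne_zero.mpr ⟨⟨0⟩, hfinq i⟩
  by_cases hJT : J = ⊤
  · subst hJT
    haveI : Subsingleton (T ⧸ (⊤ : Ideal T)) := Ideal.Quotient.subsingleton_iff.mpr rfl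
    have h1 : Nat.card (T ⧸ (⊤ : Ideal T)) = 1 := Nat.card_eq_one_iff_unique.mpr ⟨inferInstance, ⟨(0 : T ⧸ (⊤ : Ideal T))⟩⟩
    rw [h1]
    apply Finset.one_le_prod'
    intro i _
    exact Nat.one_le_iff_ne_zero.mpr (hqne i)
  -- main case
  have hs : 0 < s := by
    by_contra hs0
    have hzs : s = 0 := by omega
    subst hzs
    haveI : Subsingleton (∀ i : Fin 0, Fin (n i) → O) :=
      ⟨fun a b => funext fun i => absurd i.2 (by omega)⟩
    exact zero_ne_one (α := T) (Subtype.ext (Subsingleton.elim _ _))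
  have hne : ∀ i : Fin s, Nonempty (Fin (n i)) := fun i => ⟨⟨0, hn i⟩⟩
  haveI : ∀ i, Nontrivial (Fin (n i) → O) := fun i => @Function.nontrivial _ _ (hne i) _
  haveI : ∀ i, Nontrivial (Ti i) := fun i =>
    nontrivial_of_ne 0 1 (fun h => zero_ne_one (α := Fin (n i) → O) (congrArg Subtype.val h))
  haveI : ∀ i, IsLocalRing (Ti i) := fun i =>
    IsLocalRing.of_surjective' ((π i) : T →+* Ti i) (hπs i)
  haveI hlocO : ∀ i, IsLocalHom (algebraMap O (Ti i)) := by
    intro i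
    constructor
    intro c hc
    obtain ⟨b, hb⟩ := isUnit_iff_exists_inv.mp hc
    have hval := congrArg Subtype.val hb
    have hj := congrFun hval ⟨0, hn i⟩
    simp only [Subalgebra.coe_mul, Subalgebra.coe_one, Pi.mul_apply, Pi.one_apply] at hj
    have hac : ((algebraMap O (Ti i) c : Ti i) : Fin (n i) → O) ⟨0, hn i⟩ = c := rfl
    rw [hac] at hj
    exact IsUnit.of_mul_eq_one _ hj
  haveI hlocT : IsLocalHom (algebraMap O T) := by
    constructor
    intro c hc
    obtain ⟨b, hb⟩ := isUnit_iff_exists_inv.mp hc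
    have hval := congrArg Subtype.val hb
    have hj := congrFun (congrFun hval ⟨0, hs⟩) ⟨0, hn ⟨0, hs⟩⟩
    simp only [Subalgebra.coe_mul, Subalgebra.coe_one, Pi.mul_apply, Pi.one_apply] at hj
    have hac : ((algebraMap O T c : T) : ∀ i, Fin (n i) → O) ⟨0, hs⟩ ⟨0, hn ⟨0, hs⟩⟩ = c := rfl
    rw [hac] at hj
    exact IsUnit.of_mul_eq_one _ hj
  haveI : Finite (IsLocalRing.ResidueField T) := by
    have hle := IsLocalRing.le_maximalIdeal hJT
    have hsurj : Function.Surjective (Ideal.Quotient.factor hle) := by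
      intro z
      obtain ⟨y, rfl⟩ := Ideal.Quotient.mk_surjective z
      exact ⟨Ideal.Quotient.mk J y, Ideal.Quotient.factor_mk hle y⟩
    exact Finite.of_surjective _ hsurj
  haveI : Finite (IsLocalRing.ResidueField O) :=
    Finite.of_injective (IsLocalRing.ResidueField.map (algebraMap O T)) (RingHom.injective _)
  haveI : Fintype (IsLocalRing.ResidueField O) := Fintype.ofFinite _
  have hsF : s ≤ Fintype.card (IsLocalRing.ResidueField O) := by
    have h1 : Nat.card (IsLocalRing.ResidueField O)ˣ
        = Fintype.card (IsLocalRing.ResidueField O) - 1 := by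
      rw [Nat.card_eq_fintype_card, Fintype.card_units]
    have h2 : 0 < Fintype.card (IsLocalRing.ResidueField O) := Fintype.card_pos
    rw [h1] at hres
    omega
  -- existence of a simultaneous generator
  have key : ∀ S : Finset (Fin s), ∃ g : T, g ∈ J ∧
      ∀ i ∈ S, Ideal.map (π i) J = Ideal.span {π i g} := by
    intro S
    induction S using Finset.induction_on with
    | empty => exact ⟨0, J.zero_mem, fun i hi => absurd hi (Finset.notMem_empty i)⟩
    | @insert a S haS IH =>
      obtain ⟨g', hg'J, hg'⟩ := IH
      haveI := hprin a
      obtain ⟨x₀, hx₀⟩ := Submodule.IsPrincipal.principal (Ideal.map (π a) J)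
      have hx₀J : x₀ ∈ Ideal.map (π a) J := by
        rw [hx₀]; exact Submodule.mem_span_singleton_self x₀
      obtain ⟨f, hfJ, hfx⟩ := (Ideal.mem_map_iff_of_surjective (π a) (hπs a)).mp hx₀J
      have hJa : Ideal.map (π a) J = Ideal.span {π a f} := by
        rw [hx₀, hfx, Ideal.submodule_span_eq]
      set Bg : ∀ i : Fin s, (Ti i) := fun i => if i ∈ S then π i g' else π i f with hBg
      have hBgen : ∀ i ∈ insert a S, Ideal.map (π i) J = Ideal.span {Bg i} := by
        intro i hi
        rcases Finset.mem_insert.mp hi with rfl | hiS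
        · simp only [hBg, if_neg haS]; exact hJa
        · simp only [hBg, if_pos hiS]; exact hg' i hiS
      have hpq : ∀ i ∈ insert a S, ∃ pq : (Ti i) × (Ti i),
          π i g' = Bg i * pq.1 ∧ π i f = Bg i * pq.2 ∧ (IsUnit pq.1 ∨ IsUnit pq.2) := by
        intro i hi
        rcases Finset.mem_insert.mp hi with rfl | hiS
        · have hBa : Bg i = π i f := if_neg haS
          have hmem : π i g' ∈ Ideal.span {π i f} := by
            rw [← hJa]; exact Ideal.mem_map_of_mem _ hg'J
          obtain ⟨t, ht⟩ := Ideal.mem_span_singleton.mp hmem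
          exact ⟨(t, 1), by rw [hBa]; exact ht, by rw [hBa, mul_one], Or.inr isUnit_one⟩
        · have hBi : Bg i = π i g' := if_pos hiS
          have hmem : π i f ∈ Ideal.span {π i g'} := by
            rw [← hg' i hiS]; exact Ideal.mem_map_of_mem _ hfJ
          obtain ⟨w, hw⟩ := Ideal.mem_span_singleton.mp hmem
          exact ⟨(1, w), by rw [hBi, mul_one], by rw [hBi]; exact hw, Or.inl isUnit_one⟩
      have hP : ∀ i : Fin s, ∀ hi : i ∈ insert a S,
          π i g' = Bg i * (Classical.choose (hpq i hi)).1 ∧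
          π i f = Bg i * (Classical.choose (hpq i hi)).2 ∧
          (IsUnit (Classical.choose (hpq i hi)).1 ∨ IsUnit (Classical.choose (hpq i hi)).2) :=
        fun i hi => Classical.choose_spec (hpq i hi)
      set P : ∀ i : Fin s, (Ti i) :=
        fun i => if hi : i ∈ insert a S then (Classical.choose (hpq i hi)).1 else 1 with hPdef
      set Q : ∀ i : Fin s, (Ti i) :=
        fun i => if hi : i ∈ insert a S then (Classical.choose (hpq i hi)).2 else 1 with hQdef
      have hPQ : ∀ i ∈ insert a S, π i g' = Bg i * P i ∧ π i f = Bg i * Q i ∧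
          (IsUnit (P i) ∨ IsUnit (Q i)) := by
        intro i hi
        simp only [hPdef, hQdef, dif_pos hi]
        exact hP i hi
      obtain ⟨av, bv, hab⟩ := exists_good_pair (insert a S)
        (le_trans (Finset.card_le_univ _) (by simpa using hsF))
        (fun i => IsLocalRing.ResidueField.map (algebraMap O (Ti i)))
        (fun i => IsLocalRing.residue _ (P i)) (fun i => IsLocalRing.residue _ (Q i))
        (fun i hi => by
          rcases (hPQ i hi).2.2 with h | h
          · exact Or.inl ((RingHom.isUnit_map (IsLocalRing.residue _) h).ne_zero)
          · exact Or.inr ((RingHom.isUnit_map (IsLocalRing.residue _) h).ne_zero))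
      obtain ⟨lam, hlam⟩ := IsLocalRing.residue_surjective av
      obtain ⟨mu, hmu⟩ := IsLocalRing.residue_surjective bv
      refine ⟨algebraMap O T lam * g' + algebraMap O T mu * f,
        J.add_mem (J.mul_mem_left _ hg'J) (J.mul_mem_left _ hfJ), ?_⟩
      intro i hi
      have hgi : π i (algebraMap O T lam * g' + algebraMap O T mu * f)
          = Bg i * (algebraMap O (Ti i) lam * P i + algebraMap O (Ti i) mu * Q i) := by
        rw [map_add, map_mul, map_mul, AlgHom.commutes, AlgHom.commutes,
          (hPQ i hi).1, (hPQ i hi).2.1]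
        ring
      have hunit : IsUnit (algebraMap O (Ti i) lam * P i + algebraMap O (Ti i) mu * Q i) := by
        by_contra hnu
        have hmem : (algebraMap O (Ti i) lam * P i + algebraMap O (Ti i) mu * Q i)
            ∈ IsLocalRing.maximalIdeal (Ti i) := hnu
        have hres0 := Ideal.Quotient.eq_zero_iff_mem.mpr hmem
        apply hab i hi
        have e1 : IsLocalRing.ResidueField.map (algebraMap O (Ti i)) av
            = IsLocalRing.residue (Ti i) (algebraMap O (Ti i) lam) := by
          rw [← hlam, IsLocalRing.ResidueField.map_residue]
        have e2 : IsLocalRing.ResidueField.map (algebraMap O (Ti i)) bv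
            = IsLocalRing.residue (Ti i) (algebraMap O (Ti i) mu) := by
          rw [← hmu, IsLocalRing.ResidueField.map_residue]
        rw [e1, e2]
        rw [← map_mul, ← map_mul, ← map_add]
        exact hres0
      rw [hBgen i hi, hgi, Ideal.span_singleton_mul_right_unit hunit]
  obtain ⟨g, hgJ, hgenU⟩ := key Finset.univ
  have hgen : ∀ i, Ideal.map (π i) J = Ideal.span {π i g} :=
    fun i => hgenU i (Finset.mem_univ i)
  -- O is infinite
  have hOinf : ¬ Finite O := by
    intro hfin
    have hf : IsField O := Finite.isField_of_domain O
    have := IsLocalRing.isField_iff_maximalIdeal_eq.mp hf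
    obtain ⟨ϖ, hϖ⟩ := IsDiscreteValuationRing.exists_irreducible O
    rw [(IsDiscreteValuationRing.irreducible_iff_uniformizer ϖ).mp hϖ] at this
    have hϖ0 : ϖ ∈ Ideal.span {ϖ} := Ideal.mem_span_singleton_self ϖ
    rw [this] at hϖ0
    exact hϖ.ne_zero (Ideal.mem_bot.mp hϖ0)
  -- coordinates of g are all nonzero
  have hgnz : ∀ i j, (g : ∀ i', Fin (n i') → O) i j ≠ 0 := by
    intro i j h0
    have hfinTi : Finite ((Ti i) ⧸ Ideal.span {π i g}) := by
      have := hfinq i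
      rwa [hgen i] at this
    apply hOinf
    have hinj : Function.Injective
        (fun lam : O => Ideal.Quotient.mk (Ideal.span {π i g}) (algebraMap O (Ti i) lam)) := by
      intro lam mu h
      have hmem := Ideal.Quotient.eq.mp h
      rw [← map_sub] at hmem
      obtain ⟨u, hu⟩ := Ideal.mem_span_singleton.mp hmem
      have hvu := congrFun (congrArg Subtype.val hu) j
      simp only [Subalgebra.coe_mul, Pi.mul_apply] at hvu
      have hl : ((algebraMap O (Ti i) (lam - mu) : Ti i) : Fin (n i) → O) j = lam - mu := rfl
      have hr : ((π i g : Ti i) : Fin (n i) → O) j = 0 := h0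
      rw [hl, hr, zero_mul] at hvu
      exact sub_eq_zero.mp hvu
    exact Finite.of_injective _ hinj
  -- multiplication by g is injective
  have hφinj : Function.Injective
      (AddMonoidHom.mulLeft ((g : ∀ i', Fin (n i') → O))) := by
    intro a b hab
    funext i j
    have h1 := congrFun (congrFun hab i) j
    simp only [AddMonoidHom.mulLeft, Pi.mul_apply] at h1
    exact mul_left_cancel₀ (hgnz i j) h1
  have hφinj_i : ∀ i, Function.Injective
      (AddMonoidHom.mulLeft ((g : ∀ i', Fin (n i') → O) i)) := by
    intro i a b hab
    funext j
    have h1 := congrFun hab j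
    simp only [AddMonoidHom.mulLeft, Pi.mul_apply] at h1
    exact mul_left_cancel₀ (hgnz i j) h1
  -- a uniform denominator c
  obtain ⟨c, hc0, hcT⟩ : ∃ c : O, c ≠ 0 ∧ ∀ a, c • a ∈ T := by
    let bas := Pi.basis (fun i : Fin s => Pi.basisFun O (Fin (n i)))
    choose cf hcf0 hcfT using fun k => hfull (bas k)
    refine ⟨∏ k, cf k, Finset.prod_ne_zero_iff.mpr (fun k _ => hcf0 k), ?_⟩
    intro a
    have hrepr := bas.sum_repr a
    have hexp : (∏ k, cf k) • a
        = ∑ k, ((∏ k' ∈ Finset.univ.erase k, cf k') * bas.repr a k) • (cf k • bas k) := by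
      conv_lhs => rw [← hrepr]
      rw [Finset.smul_sum]
      apply Finset.sum_congr rfl
      intro k _
      have hck : cf k * ∏ k' ∈ Finset.univ.erase k, cf k' = ∏ k', cf k' :=
        Finset.mul_prod_erase _ _ (Finset.mem_univ k)
      rw [smul_smul, smul_smul, ← hck]
      congr 1
      ring
    rw [hexp]
    apply Submodule.sum_mem T.toSubmodule
    intro k _
    exact Submodule.smul_mem T.toSubmodule _ (hcfT k)
  -- inclusion homs and their indices
  let ιT : T →+ (∀ i, Fin (n i) → O) :=
    { toFun := Subtype.val, map_zero' := rfl, map_add' := fun _ _ => rfl }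
  have hιinj : Function.Injective ιT := Subtype.val_injective
  have hcA_ne : (AddMonoidHom.mulLeft (algebraMap O (∀ i, Fin (n i) → O) c)).range.index ≠ 0 := by
    rw [index_range_mulLeft_pi]
    apply Finset.prod_ne_zero_iff.mpr
    intro i _
    have hx : (algebraMap O (∀ i', Fin (n i') → O) c) i = fun _ : Fin (n i) => c := rfl
    rw [hx, index_range_mulLeft_pi]
    apply Finset.prod_ne_zero_iff.mpr
    intro j _
    exact index_range_mulLeft_ne_zero hc0
  have hidxT : ιT.range.index ≠ 0 := by
    have hle : (AddMonoidHom.mulLeft (algebraMap O (∀ i, Fin (n i) → O) c)).range ≤ ιT.range := by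
      rintro z ⟨a, rfl⟩
      exact ⟨⟨c • a, hcT a⟩, (Algebra.smul_def c a).symm⟩
    intro h0
    apply hcA_ne
    have hdvd := AddSubgroup.index_dvd_of_le hle
    rw [h0] at hdvd
    exact zero_dvd_iff.mp hdvd
  let ιi : ∀ i, (Ti i) →+ (Fin (n i) → O) := fun i =>
    { toFun := Subtype.val, map_zero' := rfl, map_add' := fun _ _ => rfl }
  have hιiinj : ∀ i, Function.Injective (ιi i) := fun i => Subtype.val_injective
  have hidxTi : ∀ i, (ιi i).range.index ≠ 0 := by
    intro i
    have hcA_ne_i : (AddMonoidHom.mulLeft (algebraMap O (Fin (n i) → O) c)).range.index ≠ 0 := by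
      rw [index_range_mulLeft_pi]
      apply Finset.prod_ne_zero_iff.mpr
      intro j _
      exact index_range_mulLeft_ne_zero hc0
    have hle : (AddMonoidHom.mulLeft (algebraMap O (Fin (n i) → O) c)).range ≤ (ιi i).range := by
      rintro z ⟨a, rfl⟩
      have hmem : c • a ∈ Ti i := by
        refine ⟨⟨c • (Pi.single i a : ∀ i', Fin (n i') → O), hcT _⟩, ?_⟩
        show (c • (Pi.single i a : ∀ i', Fin (n i') → O)) i = c • a
        rw [Pi.smul_apply, Pi.single_eq_same]
      exact ⟨⟨c • a, hmem⟩, (Algebra.smul_def c a).symm⟩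
    intro h0
    apply hcA_ne_i
    have hdvd := AddSubgroup.index_dvd_of_le hle
    rw [h0] at hdvd
    exact zero_dvd_iff.mp hdvd
  -- index computations
  have hu1 : Nat.card (T ⧸ Ideal.span {g})
      = (AddMonoidHom.mulLeft ((g : ∀ i, Fin (n i) → O))).range.index := by
    rw [card_quot_span_singleton]
    exact index_range_restrict ιT hιinj hidxT _ hφinj (AddMonoidHom.mulLeft g) (fun t => rfl)
  have hu3 : (AddMonoidHom.mulLeft ((g : ∀ i, Fin (n i) → O))).range.index
      = ∏ i, (AddMonoidHom.mulLeft ((g : ∀ i', Fin (n i') → O) i)).range.index :=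
    index_range_mulLeft_pi _
  have hu2 : ∀ i, (AddMonoidHom.mulLeft ((g : ∀ i', Fin (n i') → O) i)).range.index
      = Nat.card ((Ti i) ⧸ Ideal.span {π i g}) := by
    intro i
    rw [card_quot_span_singleton]
    exact (index_range_restrict (ιi i) (hιiinj i) (hidxTi i) _ (hφinj_i i)
      (AddMonoidHom.mulLeft (π i g)) (fun t => rfl)).symm
  have hcard_span : Nat.card (T ⧸ Ideal.span {g})
      = ∏ i, Nat.card ((Ti i) ⧸ Ideal.map (π i) J) := by
    rw [hu1, hu3]
    apply Finset.prod_congr rfl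
    intro i _
    rw [hu2 i, hgen i]
  have hfinspan : Finite (T ⧸ Ideal.span {g}) := by
    have hne0 : Nat.card (T ⧸ Ideal.span {g}) ≠ 0 := by
      rw [hcard_span]
      exact Finset.prod_ne_zero_iff.mpr (fun i _ => hqne i)
    exact (Nat.card_ne_zero.mp hne0).2
  have hle_span : Ideal.span {g} ≤ J := (Ideal.span_singleton_le_iff_mem J).mpr hgJ
  have hsurj2 : Function.Surjective (Ideal.Quotient.factor hle_span) := by
    intro z
    obtain ⟨y, rfl⟩ := Ideal.Quotient.mk_surjective z
    exact ⟨Ideal.Quotient.mk _ y, Ideal.Quotient.factor_mk hle_span y⟩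
  calc Nat.card (T ⧸ J) ≤ Nat.card (T ⧸ Ideal.span {g}) :=
      Nat.card_le_card_of_surjective _ hsurj2
    _ = ∏ i, Nat.card ((Ti i) ⧸ Ideal.map (π i) J) := hcard_span
end

section
/- Let O be a DVR with residue field F, A = O^n = A_1 × ... × A_s, T ⊆ A a local complete O-subalgebra of full O-rank, J ⊆ T an ideal of finite index, and suppose #F^× ≥ s−1 and each J_i = φ_i(J) is principal in T_i = φ_i(T). Then there exists an element (α_1, ..., α_s) ∈ J such that α_i generates J_i as an ideal of T_i for every i. -/
set_option synthInstance.maxHeartbeats 400000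

set_option maxHeartbeats 4000000

section Helpers

/-- In a local ring, a unit plus an element of the maximal ideal is a unit. -/
lemma aux_unit_add_mem {R : Type*} [CommRing R] [IsLocalRing R] {x y : R}
    (hx : IsUnit x) (hy : y ∈ IsLocalRing.maximalIdeal R) : IsUnit (x + y) := by
  by_contra h
  have hxy : x + y ∈ IsLocalRing.maximalIdeal R :=
    (IsLocalRing.mem_maximalIdeal _).mpr (mem_nonunits_iff.mpr h)
  have hx' : x ∈ IsLocalRing.maximalIdeal R := by
    have := Ideal.sub_mem _ hxy hy
    simpa using this
  exact (IsLocalRing.notMem_maximalIdeal.mpr hx) hx'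

lemma aux_mem_of_unit_mul {R : Type*} [CommRing R] {I : Ideal R} {u w : R}
    (hu : IsUnit u) (h : u * w ∈ I) : w ∈ I := by
  obtain ⟨v, hv⟩ := hu.exists_left_inv
  have := I.mul_mem_left v h
  rwa [← mul_assoc, hv, one_mul] at this

lemma aux_exists_injective_fin {X : Type*} {m : ℕ} (h : m ≤ Nat.card X) :
    ∃ f : Fin m → X, Function.Injective f := by
  rcases Nat.eq_zero_or_pos m with rfl | hm
  · exact ⟨Fin.elim0, fun a => a.elim0⟩
  · have hX : Finite X := Nat.finite_of_card_ne_zero (by omega)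
    have := Fintype.ofFinite X
    have : Nonempty (Fin m ↪ X) := by
      apply Function.Embedding.nonempty_of_card_le
      simpa [Nat.card_eq_fintype_card] using h
    obtain ⟨f⟩ := this
    exact ⟨f, f.injective⟩

/-- From `m ≤ #(residue field)ˣ` get `m` units of a local ring whose pairwise
differences are units. -/
lemma aux_exists_units_lift {O : Type*} [CommRing O] [IsLocalRing O] {m : ℕ}
    (h : m ≤ Nat.card (IsLocalRing.ResidueField O)ˣ) :
    ∃ lam : Fin m → O, (∀ a, IsUnit (lam a)) ∧
      ∀ a b, a ≠ b → IsUnit (lam a - lam b) := by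
  obtain ⟨u, hu⟩ := aux_exists_injective_fin h
  choose lam hlam using fun a => IsLocalRing.residue_surjective (R := O) (u a : _)
  refine ⟨lam, ?_, ?_⟩
  · intro a
    rw [← IsLocalRing.notMem_maximalIdeal]
    intro hmem
    have hz : IsLocalRing.residue O (lam a) = 0 :=
      Ideal.Quotient.eq_zero_iff_mem.mpr hmem
    rw [hlam] at hz
    exact (u a).ne_zero hz
  · intro a b hab
    rw [← IsLocalRing.notMem_maximalIdeal]
    intro hmem
    have hz : IsLocalRing.residue O (lam a - lam b) = 0 :=
      Ideal.Quotient.eq_zero_iff_mem.mpr hmem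
    rw [map_sub, hlam, hlam, sub_eq_zero] at hz
    exact hab (hu (Units.ext hz))

end Helpers

/-- Proposition: with `O` a DVR with residue field `F`, `A = ∏_{i=1}^s O^{n_i}`, `T ⊆ A`
a local complete `O`-subalgebra of full rank, `J ⊆ T` an ideal of finite index, if
`#F^× ≥ s - 1` and each `J_i = φ_i(J)` is principal in `T_i = φ_i(T)`, then there is an
element `α = (α_1, …, α_s) ∈ J` such that `α_i` generates `J_i` for every `i`. -/
theorem exists_mem_generating_all_projections
    {O : Type*} [CommRing O] [IsDomain O] [IsDiscreteValuationRing O]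
    {s : ℕ} {n : Fin s → ℕ} (hn : ∀ i, 0 < n i)
    (T : Subalgebra O (∀ i : Fin s, Fin (n i) → O))
    [IsLocalRing T] [IsAdicComplete (IsLocalRing.maximalIdeal T) T]
    (hfull : ∀ a : (∀ i : Fin s, Fin (n i) → O), ∃ c : O, c ≠ 0 ∧ c • a ∈ T)
    (J : Ideal T) [Finite (T ⧸ J)]
    (hres : s - 1 ≤ Nat.card (IsLocalRing.ResidueField O)ˣ)
    (hprin : ∀ i : Fin s, (Ideal.map (projAlgHom T i).rangeRestrict J).IsPrincipal) :
    ∃ α ∈ J, ∀ i : Fin s,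
      Ideal.map (projAlgHom T i).rangeRestrict J
        = Ideal.span {(projAlgHom T i).rangeRestrict α} := by
  classical
  -- each image T_i is nontrivial and local
  have hnontriv : ∀ i : Fin s, Nontrivial ((projAlgHom T i).range) := by
    intro i
    refine nontrivial_of_ne 1 0 ?_
    intro h
    have h' := congrFun (congrArg Subtype.val h) ⟨0, hn i⟩
    exact one_ne_zero h'
  have hloc : ∀ i : Fin s, IsLocalRing ((projAlgHom T i).range) := by
    intro i
    have := hnontriv i
    exact IsLocalRing.of_surjective' (projAlgHom T i).rangeRestrict.toRingHom
      (AlgHom.rangeRestrict_surjective _)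
  obtain ⟨lam, hlamu, hlamd⟩ := aux_exists_units_lift hres
  suffices H : ∀ k, k ≤ s → ∃ α ∈ J, ∀ i : Fin s, (i : ℕ) < k →
      Ideal.map (projAlgHom T i).rangeRestrict J
        = Ideal.span {(projAlgHom T i).rangeRestrict α} by
    obtain ⟨α, hαJ, hα⟩ := H s le_rfl
    exact ⟨α, hαJ, fun i => hα i i.isLt⟩
  intro k
  induction k with
  | zero => exact fun _ => ⟨0, J.zero_mem, fun i hi => absurd hi (Nat.not_lt_zero _)⟩
  | succ k ih =>
    intro hk
    obtain ⟨α, hαJ, hα⟩ := ih (Nat.le_of_succ_le hk)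
    set K : Fin s := ⟨k, hk⟩ with hKdef
    have _instK : IsLocalRing ((projAlgHom T K).range) := hloc K
    -- a generator g of J_K, lifted to β ∈ J
    obtain ⟨g, hg⟩ := (hprin K).principal
    rw [Ideal.submodule_span_eq] at hg
    have hgmem : g ∈ Ideal.map (projAlgHom T K).rangeRestrict J := by
      rw [hg]; exact Submodule.mem_span_singleton_self g
    obtain ⟨β, hβJ, hβ⟩ :=
      (Ideal.mem_map_iff_of_surjective (projAlgHom T K).rangeRestrict
        (AlgHom.rangeRestrict_surjective _)).mp hgmem
    by_cases hcase : Ideal.map (projAlgHom T K).rangeRestrict J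
        = Ideal.span {(projAlgHom T K).rangeRestrict α}
    · refine ⟨α, hαJ, fun i hi => ?_⟩
      rcases Nat.lt_succ_iff_lt_or_eq.mp hi with h | h
      · exact hα i h
      · have hiK : i = K := Fin.ext h
        rw [hiK]; exact hcase
    · -- α does not generate J_K; write φ_K(α) = g * t with t in the maximal ideal
      have hαK : (projAlgHom T K).rangeRestrict α
          ∈ Ideal.span {g} := by
        rw [← hg]; exact Ideal.mem_map_of_mem _ hαJ
      obtain ⟨t, ht⟩ := Ideal.mem_span_singleton.mp hαK
      have htm : t ∈ IsLocalRing.maximalIdeal ((projAlgHom T K).range) := by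
        rw [IsLocalRing.mem_maximalIdeal, mem_nonunits_iff]
        intro hu
        apply hcase
        rw [hg, ht, Ideal.span_singleton_mul_right_unit hu]
      -- for j < k, write φ_j(β) = φ_j(α) * w j
      have hwex : ∀ j : Fin s, (j : ℕ) < k → ∃ w,
          (projAlgHom T j).rangeRestrict β = (projAlgHom T j).rangeRestrict α * w := by
        intro j hj
        have : (projAlgHom T j).rangeRestrict β
            ∈ Ideal.span {(projAlgHom T j).rangeRestrict α} := by
          rw [← hα j hj]; exact Ideal.mem_map_of_mem _ hβJ
        exact Ideal.mem_span_singleton.mp this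
      choose w hwspec using hwex
      -- the candidates
      set cand : Option (Fin (s - 1)) → T := fun c =>
        Option.rec β (fun a => α + algebraMap O T (lam a) * β) c with hcand
      have hcandJ : ∀ c, cand c ∈ J := by
        rintro (_ | a)
        · exact hβJ
        · exact J.add_mem hαJ (J.mul_mem_left _ hβJ)
      -- every candidate generates J_K
      have hgoodK : ∀ c, Ideal.map (projAlgHom T K).rangeRestrict J
          = Ideal.span {(projAlgHom T K).rangeRestrict (cand c)} := by
        rintro (_ | a)
        · show _ = Ideal.span {(projAlgHom T K).rangeRestrict β}
          rw [hβ, hg]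
        · show _ = Ideal.span
            {(projAlgHom T K).rangeRestrict (α + algebraMap O T (lam a) * β)}
          have hcomp : (projAlgHom T K).rangeRestrict (α + algebraMap O T (lam a) * β)
              = g * (t + algebraMap O ((projAlgHom T K).range) (lam a)) := by
            rw [map_add, map_mul, AlgHom.commutes, hβ, ht]; ring
          have hunit : IsUnit (t + algebraMap O ((projAlgHom T K).range) (lam a)) := by
            rw [add_comm]
            exact aux_unit_add_mem ((hlamu a).map (algebraMap O _)) htm
          rw [hcomp, Ideal.span_singleton_mul_right_unit hunit, hg]
      -- computations at j < k
      have hcompj : ∀ (a : Fin (s - 1)) (j : Fin s) (hj : (j : ℕ) < k),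
          (projAlgHom T j).rangeRestrict (α + algebraMap O T (lam a) * β)
            = (projAlgHom T j).rangeRestrict α
              * (1 + algebraMap O ((projAlgHom T j).range) (lam a) * w j hj) := by
        intro a j hj
        rw [map_add, map_mul, AlgHom.commutes, hwspec j hj]; ring
      -- badness forces a maximal-ideal membership
      have hbadsome : ∀ (a : Fin (s - 1)) (j : Fin s) (hj : (j : ℕ) < k),
          Ideal.map (projAlgHom T j).rangeRestrict J
              ≠ Ideal.span {(projAlgHom T j).rangeRestrict (cand (some a))} →
          1 + algebraMap O ((projAlgHom T j).range) (lam a) * w j hj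
            ∈ IsLocalRing.maximalIdeal ((projAlgHom T j).range) := by
        intro a j hj hne
        have _inst := hloc j
        rw [IsLocalRing.mem_maximalIdeal, mem_nonunits_iff]
        intro hu
        apply hne
        show _ = Ideal.span
          {(projAlgHom T j).rangeRestrict (α + algebraMap O T (lam a) * β)}
        rw [hcompj a j hj, Ideal.span_singleton_mul_right_unit hu, hα j hj]
      have hbadnone : ∀ (j : Fin s) (hj : (j : ℕ) < k),
          Ideal.map (projAlgHom T j).rangeRestrict J
              ≠ Ideal.span {(projAlgHom T j).rangeRestrict (cand none)} →
          w j hj ∈ IsLocalRing.maximalIdeal ((projAlgHom T j).range) := by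
        intro j hj hne
        have _inst := hloc j
        rw [IsLocalRing.mem_maximalIdeal, mem_nonunits_iff]
        intro hu
        apply hne
        show _ = Ideal.span {(projAlgHom T j).rangeRestrict β}
        rw [hwspec j hj, Ideal.span_singleton_mul_right_unit hu, hα j hj]
      -- suppose no candidate works; derive a contradiction by pigeonhole
      by_contra hcon
      push_neg at hcon
      have hbad : ∀ c, ∃ j : Fin s, (j : ℕ) < k ∧
          Ideal.map (projAlgHom T j).rangeRestrict J
            ≠ Ideal.span {(projAlgHom T j).rangeRestrict (cand c)} := by
        intro c
        obtain ⟨i, hi, hne⟩ := hcon (cand c) (hcandJ c)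
        rcases Nat.lt_succ_iff_lt_or_eq.mp hi with h | h
        · exact ⟨i, h, hne⟩
        · have hiK : i = K := Fin.ext h
          rw [hiK] at hne
          exact absurd (hgoodK c) hne
      choose pick hpick1 hpick2 using hbad
      have hone : ∀ (j : Fin s), (1 : ((projAlgHom T j).range))
          ∉ IsLocalRing.maximalIdeal ((projAlgHom T j).range) := by
        intro j
        have _inst := hloc j
        exact (Ideal.ne_top_iff_one _).mp (IsLocalRing.maximalIdeal.isMaximal _).ne_top
      have hinj : Function.Injective pick := by
        rintro (_ | a) (_ | b) he
        · rfl
        · -- none vs some b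
          exfalso
          have hj := hpick1 none
          have hwm := hbadnone (pick none) hj (hpick2 none)
          have hne := hpick2 (some b)
          rw [← he] at hne
          have hFb := hbadsome b (pick none) hj hne
          have h1 : (1 : ((projAlgHom T (pick none)).range))
              ∈ IsLocalRing.maximalIdeal _ := by
            have := Ideal.sub_mem _ hFb
              (Ideal.mul_mem_left _ (algebraMap O _ (lam b)) hwm)
            simpa using this
          exact hone _ h1
        · -- some a vs none
          exfalso
          have hj := hpick1 none
          have hwm := hbadnone (pick none) hj (hpick2 none)
          have hne := hpick2 (some a)
          rw [he] at hne
          have hFa := hbadsome a (pick none) hj hne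
          have h1 : (1 : ((projAlgHom T (pick none)).range))
              ∈ IsLocalRing.maximalIdeal _ := by
            have := Ideal.sub_mem _ hFa
              (Ideal.mul_mem_left _ (algebraMap O _ (lam a)) hwm)
            simpa using this
          exact hone _ h1
        · -- some a vs some b
          by_cases hab : a = b
          · rw [hab]
          exfalso
          have hj := hpick1 (some a)
          have hFa := hbadsome a (pick (some a)) hj (hpick2 (some a))
          have hne := hpick2 (some b)
          rw [← he] at hne
          have hFb := hbadsome b (pick (some a)) hj hne
          have hdiff : algebraMap O ((projAlgHom T (pick (some a))).range)
                (lam a - lam b) * w (pick (some a)) hj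
              = (1 + algebraMap O _ (lam a) * w (pick (some a)) hj)
                - (1 + algebraMap O _ (lam b) * w (pick (some a)) hj) := by
            rw [map_sub]; ring
          have hdm : algebraMap O ((projAlgHom T (pick (some a))).range)
                (lam a - lam b) * w (pick (some a)) hj
              ∈ IsLocalRing.maximalIdeal _ := by
            rw [hdiff]; exact Ideal.sub_mem _ hFa hFb
          have hwm : w (pick (some a)) hj
              ∈ IsLocalRing.maximalIdeal ((projAlgHom T (pick (some a))).range) :=
            aux_mem_of_unit_mul ((hlamd a b hab).map (algebraMap O _)) hdm
          have h1 : (1 : ((projAlgHom T (pick (some a))).range))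
              ∈ IsLocalRing.maximalIdeal _ := by
            have := Ideal.sub_mem _ hFa
              (Ideal.mul_mem_left _ (algebraMap O _ (lam a)) hwm)
            simpa using this
          exact hone _ h1
      -- pigeonhole: an injection Option (Fin (s-1)) ↪ Fin k, impossible
      have hk1 : 1 ≤ s := Nat.one_le_of_lt hk
      have hcard : Fintype.card (Option (Fin (s - 1))) ≤ Fintype.card (Fin k) := by
        refine Fintype.card_le_of_injective (fun c => (⟨pick c, hpick1 c⟩ : Fin k)) ?_
        intro c c' hcc
        have hval : (pick c : ℕ) = (pick c' : ℕ) := by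
          simpa using congrArg Fin.val hcc
        exact hinj (Fin.ext hval)
      simp only [Fintype.card_option, Fintype.card_fin] at hcard
      omega
end

section
/- Let O be a DVR and T ⊆ O^n a full-rank O-subalgebra with an ideal J of finite index such that O → T/J is surjective. Write the coordinate projections as λ_1, ..., λ_n and let m be the unique maximal ideal of T containing J. Then exactly those λ_i which factor through the localization T_m (equivalently, with λ_i(m) contained in the maximal ideal of O) can have λ_i(J) ≠ O; for all other λ_i, the image λ_i(J) equals O, i.e., the congruence depth m_{λ_i} at those coordinates is 0. -/
set_option synthInstance.maxHeartbeats 400000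

/-- Let `O` be a DVR, `T ⊆ O^n` a full-rank `O`-subalgebra, `J ⊆ T` an ideal of finite
index with `O → T/J` surjective, and `m` the unique maximal ideal of `T` containing `J`.
Then only those coordinate projections `λᵢ` which factor through the localization `T_m`
(i.e. with `λᵢ(m)` contained in the maximal ideal of `O`) can have `λᵢ(J) ≠ O`; for every
other `λᵢ` one has `λᵢ(J) = O`, i.e. the congruence depth at those coordinates is `0`. -/
theorem map_eq_top_of_not_factor
    {O : Type*} [CommRing O] [IsDomain O] [IsDiscreteValuationRing O]
    {n : ℕ} (T : Subalgebra O (Fin n → O))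
    (hfull : ∀ a : Fin n → O, ∃ c : O, c ≠ 0 ∧ c • a ∈ T)
    (J : Ideal T) [Finite (T ⧸ J)]
    (hsurj : Function.Surjective (algebraMap O (T ⧸ J)))
    (m : Ideal T) (hm : m.IsMaximal) (hJm : J ≤ m)
    (huniq : ∀ m' : Ideal T, m'.IsMaximal → J ≤ m' → m' = m) :
    ∀ i : Fin n,
      ¬ (Ideal.map ((Pi.evalAlgHom O (fun _ : Fin n => O) i).comp T.val) m
          ≤ IsLocalRing.maximalIdeal O) →
      Ideal.map ((Pi.evalAlgHom O (fun _ : Fin n => O) i).comp T.val) J = ⊤ := by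
  intro i hne
  set f := (Pi.evalAlgHom O (fun _ : Fin n => O) i).comp T.val with hf
  have hfs : Function.Surjective f := fun c => ⟨algebraMap O T c, f.commutes c⟩
  by_contra h
  -- the comap of the image ideal is proper and contains J and ker f
  have h1 : (1 : O) ∉ Ideal.map (f : T →+* O) J := fun hmem => h (Ideal.eq_top_of_isUnit_mem _ hmem isUnit_one)
  set K := Ideal.comap (f : T →+* O) (Ideal.map (f : T →+* O) J) with hK
  have hKne : K ≠ ⊤ := by
    intro hKt
    have : (1 : T) ∈ K := hKt ▸ Submodule.mem_top
    exact h1 (by simpa using Ideal.mem_comap.mp this)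
  obtain ⟨m', hm', hKm'⟩ := Ideal.exists_le_maximal K hKne
  have hJK : J ≤ K := Ideal.le_comap_map
  have hm'm : m' = m := huniq m' hm' (hJK.trans hKm')
  have hker : RingHom.ker (f : T →+* O) ≤ m := by
    rw [← hm'm]
    refine le_trans ?_ hKm'
    intro x hx
    simp only [hK, Ideal.mem_comap, RingHom.mem_ker.mp hx]
    exact Ideal.zero_mem _
  have hmaptop : Ideal.map (f : T →+* O) m ≠ ⊤ := fun ht => hm.ne_top
    ((Ideal.map_eq_top_iff_of_ker_le (f : T →+* O) hker
      ((f : T →+* O).isIntegral_of_surjective hfs)).mp ht)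
  exact hne (IsLocalRing.le_maximalIdeal hmaptop)
end
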